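/- arXiv:2308.15385 — 5 statements merged into one kernel-verified Lean document; each statement's English description precedes it below -/
import Mathlib

section
/- For an even natural number m ≥ 2 and an integer k with 0 ≤ k ≤ m/2 - 1, the sum (m-2k-1)! * Σ_{p=k}^{m/2-1} (-1)^(p-k) * (m-2p-2)!! / (2^(p-k) * (m-2p-1)! * (p-k)!) equals (-1)^(m/2 - k - 1) * (m-2k-3)!!. -/
open Finset

lemma prod_half (i : ℕ) :
    ((2*i+1).doubleFactorial : ℚ) = 2^(i+1) * ∏ t ∈ range (i+1), ((t:ℚ) + 1/2) := by
  induction i with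
  | zero => norm_num [Nat.doubleFactorial]
  | succ n ih =>
      rw [show 2*(n+1)+1 = (2*n+1)+2 from by ring, Nat.doubleFactorial_add_two,
        prod_range_succ]
      push_cast [ih]
      ring

lemma halfprod_pos (n : ℕ) : 0 < ∏ t ∈ range n, ((t:ℚ) + 1/2) := by
  apply prod_pos; intro t _; positivity

lemma keyF (N : ℕ) : ∀ a : ℚ, 0 < a →
    ∑ i ∈ range (N+1), (-1:ℚ)^i * (N.factorial : ℚ) / ((N - i).factorial : ℚ) /
      ∏ t ∈ range (i+1), (a + (t:ℚ)) = 1 / (a + N) := by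
  induction N with
  | zero => intro a ha; simp
  | succ N ih =>
      intro a ha
      rw [Finset.sum_range_succ']
      have h1 : ∀ i ∈ range (N+1),
          (-1:ℚ)^(i+1) * ((N+1).factorial : ℚ) / (((N+1) - (i+1)).factorial : ℚ) /
            ∏ t ∈ range (i+1+1), (a + (t:ℚ))
          = (-(N+1)/a) * ((-1:ℚ)^i * (N.factorial : ℚ) / ((N - i).factorial : ℚ) /
            ∏ t ∈ range (i+1), ((a+1) + (t:ℚ))) := by
        intro i hi
        rw [Finset.prod_range_succ' (fun t => a + (t:ℚ))]
        have : ∏ t ∈ range (i+1), (a + ((t+1:ℕ):ℚ)) = ∏ t ∈ range (i+1), ((a+1) + (t:ℚ)) := by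
          apply prod_congr rfl; intro t _; push_cast; ring
        rw [Nat.succ_sub_succ N i, this, Nat.factorial_succ]
        have hp : (0:ℚ) < ∏ t ∈ range (i+1), ((a+1) + (t:ℚ)) := by
          apply prod_pos; intro t _; positivity
        have hf : ((N-i).factorial : ℚ) ≠ 0 := by positivity
        push_cast
        field_simp
        ring
      rw [Finset.sum_congr rfl h1, ← Finset.mul_sum, ih (a+1) (by linarith)]
      have : a + 1 + (N:ℚ) ≠ 0 := by positivity
      have ha' : a ≠ 0 := ne_of_gt ha
      push_cast
      field_simp
      simp only [Finset.prod_range_one, Nat.cast_zero, add_zero]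
      ring

lemma reduced (N : ℕ) :
    ((2*N+1).factorial : ℚ) * ∑ j ∈ range (N+1),
      (-1:ℚ)^j * ((2*(N-j)).doubleFactorial : ℚ) /
        (2^j * ((2*(N-j)+1).factorial : ℚ) * ((j).factorial : ℚ))
    = (-1:ℚ)^N * ((2*N-1).doubleFactorial : ℚ) := by
  have hrefl := Finset.sum_range_reflect (fun j => (-1:ℚ)^j * ((2*(N-j)).doubleFactorial : ℚ) /
        (2^j * ((2*(N-j)+1).factorial : ℚ) * ((j).factorial : ℚ))) (N+1)
  simp only [Nat.add_sub_cancel] at hrefl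
  rw [← hrefl]
  have hcong : ∀ i ∈ range (N+1),
      (-1:ℚ)^(N-i) * ((2*(N-(N-i))).doubleFactorial : ℚ) /
        (2^(N-i) * ((2*(N-(N-i))+1).factorial : ℚ) * ((N-i).factorial : ℚ))
      = ((-1:ℚ)^N / (2^(N+1) * (N.factorial : ℚ))) *
        ((-1:ℚ)^i * (N.factorial : ℚ) / ((N - i).factorial : ℚ) /
          ∏ t ∈ range (i+1), ((1/2:ℚ) + (t:ℚ))) := by
    intro i hi
    have hiN : i ≤ N := Nat.lt_succ_iff.mp (mem_range.mp hi)
    obtain ⟨d, hd⟩ : ∃ d, N = i + d := ⟨N - i, (Nat.add_sub_cancel' hiN).symm⟩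
    subst hd
    simp only [Nat.add_sub_cancel_left, Nat.add_sub_cancel]
    rw [show 2*i+1 = (2*i)+1 from rfl, Nat.factorial_eq_mul_doubleFactorial,
      Nat.doubleFactorial_two_mul]
    have hph := prod_half i
    have hpp : (0:ℚ) < ∏ t ∈ range (i+1), ((t:ℚ) + 1/2) := by
      apply prod_pos; intro t _; positivity
    have h2 : ∏ t ∈ range (i+1), ((1/2:ℚ) + (t:ℚ)) = ∏ t ∈ range (i+1), ((t:ℚ) + 1/2) := by
      apply prod_congr rfl; intro t _; ring
    push_cast
    rw [h2, hph]
    set P := ∏ t ∈ range (i+1), ((t:ℚ) + 1/2) with hP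
    have hf1 : ((i+d).factorial : ℚ) ≠ 0 := by positivity
    have hf2 : ((d).factorial : ℚ) ≠ 0 := by positivity
    have hf3 : ((i).factorial : ℚ) ≠ 0 := by positivity
    push_cast [pow_add]
    rcases Nat.even_or_odd i with hpar | hpar
    · rw [hpar.neg_one_pow]
      field_simp
    · rw [hpar.neg_one_pow]
      field_simp
  rw [Finset.sum_congr rfl hcong, ← Finset.mul_sum, keyF N (1/2) (by norm_num)]
  have e1 : ((2*N+1).factorial : ℚ) = (2*N+1) * ((2*N-1).doubleFactorial : ℚ) * (2^N * (N.factorial : ℚ)) := by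
    rw [show 2*N+1 = (2*N)+1 from rfl, Nat.factorial_eq_mul_doubleFactorial,
      Nat.doubleFactorial_add_one, Nat.doubleFactorial_two_mul]
    push_cast
    ring
  rw [e1]
  have h1 : ((1:ℚ)/2 + N) ≠ 0 := by positivity
  have hf : ((N).factorial : ℚ) ≠ 0 := by positivity
  field_simp
  ring

/-- For even `m ≥ 2` and `0 ≤ k ≤ m/2 - 1`,
`(m-2k-1)! * Σ_{p=k}^{m/2-1} (-1)^(p-k) * (m-2p-2)‼ / (2^(p-k) * (m-2p-1)! * (p-k)!)`
equals `(-1)^(m/2-k-1) * (m-2k-3)‼`, as rational numbers. -/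
theorem c_coeff_formula (m k : ℕ) (hm : Even m) (hm2 : 2 ≤ m) (hk : k ≤ m / 2 - 1) :
    (Nat.factorial (m - 2 * k - 1) : ℚ) *
        ∑ p ∈ Finset.Icc k (m / 2 - 1),
          (-1 : ℚ) ^ (p - k) * (Nat.doubleFactorial (m - 2 * p - 2) : ℚ) /
            ((2 : ℚ) ^ (p - k) * (Nat.factorial (m - 2 * p - 1) : ℚ) *
              (Nat.factorial (p - k) : ℚ)) =
      (-1 : ℚ) ^ (m / 2 - k - 1) * (Nat.doubleFactorial (m - 2 * k - 3) : ℚ) := by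
  obtain ⟨n, hn⟩ := hm
  have hn1 : 1 ≤ n := by omega
  have hm2' : m / 2 = n := by omega
  set N := n - 1 - k with hN
  have hkN : k ≤ n - 1 := by rwa [hm2'] at hk
  rw [hm2']
  rw [show Finset.Icc k (n-1) = Finset.Ico k n from by rw [← Finset.Ico_add_one_right_eq_Icc]; congr 1; omega]
  rw [Finset.sum_Ico_eq_sum_range, show n - k = N + 1 from by omega]
  have hterm : ∀ i ∈ range (N+1),
      (-1:ℚ)^(k+i-k) * ((m - 2*(k+i) - 2).doubleFactorial : ℚ) /
        ((2:ℚ)^(k+i-k) * ((m - 2*(k+i)-1).factorial : ℚ) * ((k+i-k).factorial : ℚ))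
      = (-1:ℚ)^i * ((2*(N-i)).doubleFactorial : ℚ) /
        (2^i * ((2*(N-i)+1).factorial : ℚ) * ((i).factorial : ℚ)) := by
    intro i hi
    have hiN : i ≤ N := by have := mem_range.mp hi; omega
    have e1 : k+i-k = i := by omega
    have e2 : m - 2*(k+i) - 2 = 2*(N-i) := by omega
    have e3 : m - 2*(k+i) - 1 = 2*(N-i)+1 := by omega
    rw [e1, e2, e3]
  rw [Finset.sum_congr rfl hterm]
  rw [show m - 2*k - 1 = 2*N+1 from by omega, show m - 2*k - 3 = 2*N-1 from by omega,
    Nat.add_sub_cancel]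
  exact reduced N
end

section
/- Let m be even and for 0 ≤ k ≤ m/2 - 1 define γ_{m,k} = (m-1)! * (-1)^(m/2-k-1) * (m-2k-3)!! / (2^k * k! * (m-1-2k)!). Then Σ_{k=0}^{m/2-1} γ_{m,k} = (m-2)!!. -/
open Finset

lemma key (N : ℕ) : ∀ x : ℚ, 0 < x →
    ∑ a ∈ Finset.range (N+1), (-1:ℚ)^a * (N.choose a) / (x + a) =
      (N.factorial : ℚ) / ∏ i ∈ Finset.range (N+1), (x + i) := by
  induction N with
  | zero => intro x hx; simp
  | succ N ih =>
    intro x hx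
    have hx1 : (0:ℚ) < x + 1 := by linarith
    have hP1 : (∏ i ∈ Finset.range (N+1), (x + i)) ≠ 0 := by
      apply Finset.prod_ne_zero_iff.2
      intro i _; positivity
    have hP2 : (∏ i ∈ Finset.range (N+1), ((x+1) + i)) ≠ 0 := by
      apply Finset.prod_ne_zero_iff.2
      intro i _; positivity
    have hsplit : (∏ i ∈ Finset.range (N+2), (x + i))
        = (∏ i ∈ Finset.range (N+1), (x + i)) * (x + (N+1)) := by
      rw [Finset.prod_range_succ]; push_cast; ring
    have hsplit' : (∏ i ∈ Finset.range (N+2), (x + i))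
        = x * (∏ i ∈ Finset.range (N+1), ((x+1) + i)) := by
      rw [Finset.prod_range_succ' (fun i => x + (i:ℚ)) (N+1)]
      simp only [Nat.cast_zero, add_zero, Nat.cast_add, Nat.cast_one]
      rw [mul_comm]
      ring_nf
    have hstep : (∑ a ∈ Finset.range (N+2), (-1:ℚ)^a * ((N+1).choose a) / (x + a))
        = (∑ a ∈ Finset.range (N+1), (-1:ℚ)^a * (N.choose a) / (x + a))
          - (∑ a ∈ Finset.range (N+1), (-1:ℚ)^a * (N.choose a) / ((x+1) + a)) := by
      rw [Finset.sum_range_succ' (fun a => (-1:ℚ)^a * ((N+1).choose a) / (x + a)) (N+1)]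
      have h1 : ∀ b ∈ Finset.range (N+1),
          (-1:ℚ)^(b+1) * ((N+1).choose (b+1)) / (x + (b+1))
          = (-1:ℚ)^(b+1) * (N.choose (b+1)) / (x + (b+1))
            - (-1:ℚ)^b * (N.choose b) / ((x+1) + b) := by
        intro b _
        have hb : (0:ℚ) < x + (b+1) := by positivity
        rw [Nat.choose_succ_succ']
        have hxb : (x + ((b:ℚ)+1)) = ((x+1) + b) := by ring
        push_cast
        rw [hxb]
        field_simp
        ring
      push_cast
      rw [Finset.sum_congr rfl h1, Finset.sum_sub_distrib]
      have h2 : (∑ b ∈ Finset.range (N+1), (-1:ℚ)^(b+1) * (N.choose (b+1)) / (x + (b+1)))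
          = ∑ b ∈ Finset.range N, (-1:ℚ)^(b+1) * (N.choose (b+1)) / (x + (b+1)) := by
        rw [Finset.sum_range_succ]
        simp
      rw [h2]
      have h3 : (∑ a ∈ Finset.range (N+1), (-1:ℚ)^a * (N.choose a) / (x + a))
          = (∑ b ∈ Finset.range N, (-1:ℚ)^(b+1) * (N.choose (b+1)) / (x + (b+1))) + 1/x := by
        rw [Finset.sum_range_succ' (fun a => (-1:ℚ)^a * (N.choose a) / (x + a)) N]
        simp
      rw [h3]
      simp
      ring
    rw [hstep, ih x hx, ih (x+1) hx1]
    rw [eq_div_iff (by rw [hsplit]; positivity), hsplit]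
    have hfac : ((N+1).factorial : ℚ) = (N+1) * N.factorial := by
      rw [Nat.factorial_succ]; push_cast; ring
    rw [hsplit'] at hsplit
    rw [hfac]
    field_simp
    linear_combination hsplit

lemma cor (N : ℕ) :
    ∑ a ∈ Finset.range (N+1), (-1:ℚ)^a * (N.choose a) / (2*a+1) =
      4^N * (N.factorial:ℚ)^2 / ((2*N+1).factorial) := by
  have h := key N (1/2) (by norm_num)
  have hDF : ((Nat.doubleFactorial (2*N+1) : ℕ) : ℚ) = ∏ i ∈ Finset.range (N+1), (2*(i:ℚ)+1) := by
    rw [Nat.doubleFactorial_eq_prod_odd, Nat.cast_prod,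
      Finset.prod_range_succ' (fun i => 2*(i:ℚ)+1) N]
    push_cast
    ring_nf
  have hprod : ∏ i ∈ Finset.range (N+1), ((1:ℚ)/2 + i)
      = ((Nat.doubleFactorial (2*N+1) : ℕ) : ℚ) / 2^(N+1) := by
    rw [eq_div_iff (by positivity), hDF,
      show (2:ℚ)^(N+1) = ∏ _i ∈ Finset.range (N+1), (2:ℚ) by
        rw [Finset.prod_const, Finset.card_range], ← Finset.prod_mul_distrib]
    exact Finset.prod_congr rfl (fun i _ => by ring)
  have hfac2 : ((2*N+1).factorial : ℚ) = ((Nat.doubleFactorial (2*N+1) : ℕ) : ℚ) * 2^N * (N.factorial:ℚ) := by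
    have h2 := Nat.factorial_eq_mul_doubleFactorial (2*N)
    rw [Nat.doubleFactorial_two_mul] at h2
    push_cast [h2]
    ring
  have hsum : ∑ a ∈ Finset.range (N+1), (-1:ℚ)^a * (N.choose a) / (2*a+1)
      = (1/2) * ∑ a ∈ Finset.range (N+1), (-1:ℚ)^a * (N.choose a) / ((1:ℚ)/2 + a) := by
    rw [Finset.mul_sum]
    apply Finset.sum_congr rfl
    intro a _
    rw [show (1:ℚ)/2 + (a:ℚ) = (2*(a:ℚ)+1)/2 by ring, div_div_eq_mul_div]
    ring
  have hdfpos : (0:ℚ) < ((Nat.doubleFactorial (2*N+1) : ℕ) : ℚ) := by exact_mod_cast Nat.doubleFactorial_pos _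
  rw [hsum, h, hprod, hfac2]
  have hfpos : (0:ℚ) < (N.factorial:ℚ) := by exact_mod_cast N.factorial_pos
  rw [show (4:ℚ)^N = 2^(2*N) by rw [pow_mul]; norm_num]
  field_simp
  ring

/-- For even `m ≥ 2`, with
`γ_{m,k} = (m-1)! * (-1)^(m/2-k-1) * (m-2k-3)‼ / (2^k * k! * (m-1-2k)!)`,
one has `Σ_{k=0}^{m/2-1} γ_{m,k} = (m-2)‼`, as rational numbers. -/
theorem gamma_sum (m : ℕ) (hm : Even m) (hm2 : 2 ≤ m) :
    ∑ k ∈ Finset.range (m / 2),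
        (Nat.factorial (m - 1) : ℚ) * (-1 : ℚ) ^ (m / 2 - k - 1) *
          (Nat.doubleFactorial (m - 2 * k - 3) : ℚ) /
            ((2 : ℚ) ^ k * (Nat.factorial k : ℚ) * (Nat.factorial (m - 1 - 2 * k) : ℚ)) =
      (Nat.doubleFactorial (m - 2) : ℚ) := by
  obtain ⟨n, hn⟩ := hm
  have hmn : m = 2 * n := by omega
  subst hmn
  have hn1 : 1 ≤ n := by omega
  have hdiv : 2 * n / 2 = n := by omega
  rw [hdiv]
  rw [← Finset.sum_range_reflect]
  have hterm : ∀ a ∈ Finset.range n,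
      (Nat.factorial (2*n - 1) : ℚ) * (-1 : ℚ) ^ (n - (n-1-a) - 1) *
          (Nat.doubleFactorial (2*n - 2 * (n-1-a) - 3) : ℚ) /
            ((2 : ℚ) ^ (n-1-a) * (Nat.factorial (n-1-a) : ℚ) *
              (Nat.factorial (2*n - 1 - 2 * (n-1-a)) : ℚ))
      = ((2*n-1).factorial : ℚ) / (2^(n-1) * ((n-1).factorial:ℚ)) *
          ((-1:ℚ)^a * ((n-1).choose a) / (2*a+1)) := by
    intro a ha
    rw [Finset.mem_range] at ha
    have h1 : n - (n-1-a) - 1 = a := by omega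
    have h2 : 2*n - 2*(n-1-a) - 3 = 2*a - 1 := by omega
    have h3 : 2*n - 1 - 2*(n-1-a) = 2*a + 1 := by omega
    rw [h1, h2, h3]
    have e1 : ((2*a+1).factorial : ℚ)
        = (2*(a:ℚ)+1) * ((Nat.doubleFactorial (2*a-1) : ℕ) : ℚ) * 2^a * (a.factorial:ℚ) := by
      have g1 := Nat.factorial_eq_mul_doubleFactorial (2*a)
      have g2 : Nat.doubleFactorial (2*a+1) = (2*a+1) * Nat.doubleFactorial (2*a-1) := Nat.doubleFactorial_add_one (2*a)
      rw [g2, Nat.doubleFactorial_two_mul] at g1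
      push_cast [g1]
      ring
    have e2 : (((n-1).choose a : ℕ):ℚ) * (a.factorial:ℚ) * ((n-1-a).factorial:ℚ)
        = ((n-1).factorial:ℚ) := by
      have := Nat.choose_mul_factorial_mul_factorial (show a ≤ n-1 by omega)
      exact_mod_cast this
    have e3 : (2:ℚ)^(n-1-a) * 2^a = 2^(n-1) := by
      rw [← pow_add]
      congr 1
      omega
    have hd1 : (0:ℚ) < ((Nat.doubleFactorial (2*a-1) : ℕ) : ℚ) := by exact_mod_cast Nat.doubleFactorial_pos _
    have hp : (0:ℚ) < ((n-1-a).factorial:ℚ) := by exact_mod_cast Nat.factorial_pos _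
    have hp2 : (0:ℚ) < (a.factorial:ℚ) := by exact_mod_cast Nat.factorial_pos _
    have hp3 : (0:ℚ) < ((n-1).factorial:ℚ) := by exact_mod_cast Nat.factorial_pos _
    rw [e1]
    field_simp
    linear_combination
      -((2:ℚ)^(n-1)) * e2 -
        (((n-1).choose a : ℕ):ℚ) * (a.factorial:ℚ) * ((n-1-a).factorial:ℚ) * e3
  rw [Finset.sum_congr rfl hterm, ← Finset.mul_sum]
  have hnn : n = (n-1) + 1 := by omega
  rw [show Finset.range n = Finset.range ((n-1)+1) by rw [← hnn]]
  rw [cor (n-1)]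
  have h21 : 2*(n-1)+1 = 2*n-1 := by omega
  rw [h21]
  have hRHS : ((Nat.doubleFactorial (2*n-2) : ℕ) : ℚ) = 2^(n-1) * ((n-1).factorial:ℚ) := by
    have : 2*n-2 = 2*(n-1) := by omega
    rw [this, Nat.doubleFactorial_two_mul]
    push_cast
    ring
  rw [hRHS]
  have hp3 : (0:ℚ) < ((n-1).factorial:ℚ) := by exact_mod_cast Nat.factorial_pos _
  have hp4 : (0:ℚ) < ((2*n-1).factorial:ℚ) := by exact_mod_cast Nat.factorial_pos _
  rw [show (4:ℚ)^(n-1) = 2^(n-1) * 2^(n-1) by rw [show (4:ℚ) = 2*2 by norm_num, mul_pow]]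
  field_simp
end

section
/- For an even natural number m, the Gauss–Bonnet density of a Riemannian manifold of constant sectional curvature a equals (a/2)^(m/2) * m!/((m/2)!). Concretely: if R = (a/2) * (g ⊘ g) as a (2,2)-double form on an m-dimensional inner product space, then (1/(m! * (m/2)!)) * C^m(R^(m/2)) = (a/2)^(m/2) * m!/((m/2)!), where C^m denotes the full contraction and powers are taken with respect to the double wedge product. -/
open Finset

namespace GaussBonnet

/-- Components, with respect to a fixed orthonormal basis indexed by `Fin n`, of a
`(k,l)`-double form on an `n`-dimensional real inner product space: an element of
`Λ^k V* ⊗ Λ^l V*` is determined by its components. -/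
def DF (n k l : ℕ) : Type := (Fin k → Fin n) → (Fin l → Fin n) → ℝ

variable {n : ℕ}

/-- The double wedge product of double forms, given by the standard
antisymmetrization formula. -/
noncomputable def dmul {k l p q : ℕ} (ψ₁ : DF n k l) (ψ₂ : DF n p q) : DF n (k + p) (l + q) :=
  fun X Y =>
    (1 / ((Nat.factorial k * Nat.factorial l * Nat.factorial p * Nat.factorial q : ℕ) : ℝ)) *
      ∑ σ : Equiv.Perm (Fin (k + p)), ∑ τ : Equiv.Perm (Fin (l + q)),
        ((Equiv.Perm.sign σ : ℤ) : ℝ) * ((Equiv.Perm.sign τ : ℤ) : ℝ) *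
          ψ₁ (fun i => X (σ (Fin.castAdd p i))) (fun j => Y (τ (Fin.castAdd q j))) *
          ψ₂ (fun i => X (σ (Fin.natAdd k i))) (fun j => Y (τ (Fin.natAdd l j)))

/-- The full contraction `C^p` of a `(p,p)`-double form, obtained by iterating `p`
times the contraction operator `C(ψ)(X's; Y's) = Σᵢ ψ(X's, eᵢ; Y's, eᵢ)` over an
orthonormal basis; it equals the sum of the diagonal components. -/
noncomputable def fullContr {p : ℕ} (ψ : DF n p p) : ℝ := ∑ f : Fin p → Fin n, ψ f f

/-- The metric tensor `g`, viewed as a `(1,1)`-double form (components `δᵢⱼ` in an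
orthonormal basis). -/
noncomputable def gDF (n : ℕ) : DF n 1 1 := fun X Y => if X 0 = Y 0 then 1 else 0

/-- Powers of a `(k,k)`-double form with respect to the double wedge product. -/
noncomputable def dpow {k : ℕ} (ψ : DF n k k) : ∀ q : ℕ, DF n (k * q) (k * q)
  | 0 => fun _ _ => 1
  | q + 1 => dmul (dpow ψ q) ψ

/-- A double form is alternating in each of its two groups of arguments. -/
def IsAlt {k l : ℕ} (ψ : DF n k l) : Prop :=
  ∀ (σ : Equiv.Perm (Fin k)) (τ : Equiv.Perm (Fin l)) (X : Fin k → Fin n) (Y : Fin l → Fin n),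
    ψ (X ∘ σ) (Y ∘ τ) = ((Equiv.Perm.sign σ : ℤ) : ℝ) * ((Equiv.Perm.sign τ : ℤ) : ℝ) * ψ X Y

end GaussBonnet

open GaussBonnet

namespace GaussBonnetAux

open GaussBonnet Equiv Matrix

noncomputable def D (n p : ℕ) : DF n p p :=
  fun X Y => (Matrix.of fun i j => if X i = Y j then (1 : ℝ) else 0).det

lemma sign_cast_sq {N : ℕ} (σ : Perm (Fin N)) :
    ((Equiv.Perm.sign σ : ℤ) : ℝ) * ((Equiv.Perm.sign σ : ℤ) : ℝ) = 1 := by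
  rcases Int.units_eq_one_or (Equiv.Perm.sign σ) with h | h <;> rw [h] <;> norm_num

lemma key2 {N : ℕ} (M : Matrix (Fin N) (Fin N) ℝ) :
    ∑ σ : Perm (Fin N), ∑ τ : Perm (Fin N),
      ((Equiv.Perm.sign σ : ℤ) : ℝ) * ((Equiv.Perm.sign τ : ℤ) : ℝ) * ∏ z, M (σ z) (τ z)
    = (N.factorial : ℝ) * M.det := by
  rw [Finset.sum_comm]
  have h1 : ∀ τ : Perm (Fin N),
      ∑ σ : Perm (Fin N),
        ((Equiv.Perm.sign σ : ℤ) : ℝ) * ((Equiv.Perm.sign τ : ℤ) : ℝ) * ∏ z, M (σ z) (τ z)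
      = M.det := by
    intro τ
    rw [det_apply']
    refine (Fintype.sum_equiv (Equiv.mulRight τ) _ _ ?_).symm
    intro w
    simp only [Equiv.coe_mulRight, Equiv.Perm.coe_mul, Function.comp_apply]
    have hp : ∏ i, M (w i) i = ∏ z, M (w (τ z)) (τ z) := (Equiv.prod_comp τ fun i => M (w i) i).symm
    have hs : (((Equiv.Perm.sign (w * τ) : ℤ)) : ℝ) * ((Equiv.Perm.sign τ : ℤ) : ℝ)
        = ((Equiv.Perm.sign w : ℤ) : ℝ) := by
      rw [Equiv.Perm.sign_mul]
      push_cast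
      rw [mul_assoc, sign_cast_sq, mul_one]
    rw [← hs, ← hp]
  calc ∑ τ : Perm (Fin N), ∑ σ : Perm (Fin N),
        ((Equiv.Perm.sign σ : ℤ) : ℝ) * ((Equiv.Perm.sign τ : ℤ) : ℝ) * ∏ z, M (σ z) (τ z)
      = ∑ _τ : Perm (Fin N), M.det := Finset.sum_congr rfl fun τ _ => h1 τ
    _ = (N.factorial : ℝ) * M.det := by
        simp [Finset.sum_const, Fintype.card_perm, nsmul_eq_mul]

noncomputable def E {k p : ℕ} (π : Perm (Fin k)) (ρ : Perm (Fin p)) : Perm (Fin (k + p)) :=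
  finSumFinEquiv.permCongr (Equiv.sumCongr π ρ)

@[simp] lemma E_castAdd {k p : ℕ} (π : Perm (Fin k)) (ρ : Perm (Fin p)) (i : Fin k) :
    E π ρ (Fin.castAdd p i) = Fin.castAdd p (π i) := by
  simp [E, Equiv.permCongr_apply]

@[simp] lemma E_natAdd {k p : ℕ} (π : Perm (Fin k)) (ρ : Perm (Fin p)) (j : Fin p) :
    E π ρ (Fin.natAdd k j) = Fin.natAdd k (ρ j) := by
  simp [E, Equiv.permCongr_apply]

lemma sign_E {k p : ℕ} (π : Perm (Fin k)) (ρ : Perm (Fin p)) :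
    Equiv.Perm.sign (E π ρ) = Equiv.Perm.sign π * Equiv.Perm.sign ρ := by
  simp [E]

lemma step_sigma {k p : ℕ} (M : Matrix (Fin (k+p)) (Fin (k+p)) ℝ)
    (π : Perm (Fin k)) (ρ : Perm (Fin p)) :
    ∑ σ : Perm (Fin (k+p)), ∑ τ : Perm (Fin (k+p)),
      (((Equiv.Perm.sign σ : ℤ) : ℝ) * ((Equiv.Perm.sign τ : ℤ) : ℝ) *
          (((Equiv.Perm.sign π : ℤ) : ℝ) * ((Equiv.Perm.sign ρ : ℤ) : ℝ))) *
        ((∏ i, M (σ (Fin.castAdd p (π i))) (τ (Fin.castAdd p i))) *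
         (∏ j, M (σ (Fin.natAdd k (ρ j))) (τ (Fin.natAdd k j))))
    = ∑ σ : Perm (Fin (k+p)), ∑ τ : Perm (Fin (k+p)),
      ((Equiv.Perm.sign σ : ℤ) : ℝ) * ((Equiv.Perm.sign τ : ℤ) : ℝ) * ∏ z, M (σ z) (τ z) := by
  refine Fintype.sum_equiv (Equiv.mulRight (E π ρ)) _ _ ?_
  intro σ
  refine Finset.sum_congr rfl fun τ _ => ?_
  simp only [Equiv.coe_mulRight]
  have hs : ((Equiv.Perm.sign (σ * E π ρ) : ℤ) : ℝ)
      = ((Equiv.Perm.sign σ : ℤ) : ℝ) *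
        (((Equiv.Perm.sign π : ℤ) : ℝ) * ((Equiv.Perm.sign ρ : ℤ) : ℝ)) := by
    rw [Equiv.Perm.sign_mul, sign_E]
    push_cast
    ring
  have hp : ∏ z, M ((σ * E π ρ) z) (τ z)
      = (∏ i, M (σ (Fin.castAdd p (π i))) (τ (Fin.castAdd p i))) *
        (∏ j, M (σ (Fin.natAdd k (ρ j))) (τ (Fin.natAdd k j))) := by
    rw [Fin.prod_univ_add (f := fun z => M ((σ * E π ρ) z) (τ z))]
    simp [Equiv.Perm.mul_apply]
  rw [hs, hp]
  ring

lemma sum_swap4 {A B C D M : Type*} [Fintype A] [Fintype B] [Fintype C] [Fintype D]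
    [AddCommMonoid M] (f : A → B → C → D → M) :
    ∑ a, ∑ b, ∑ c, ∑ d, f a b c d = ∑ c, ∑ d, ∑ a, ∑ b, f a b c d :=
  calc ∑ a, ∑ b, ∑ c, ∑ d, f a b c d
      = ∑ a, ∑ c, ∑ b, ∑ d, f a b c d :=
        Finset.sum_congr rfl fun _ _ => Finset.sum_comm
    _ = ∑ c, ∑ a, ∑ b, ∑ d, f a b c d := Finset.sum_comm
    _ = ∑ c, ∑ a, ∑ d, ∑ b, f a b c d :=
        Finset.sum_congr rfl fun _ _ => Finset.sum_congr rfl fun _ _ => Finset.sum_comm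
    _ = ∑ c, ∑ d, ∑ a, ∑ b, f a b c d :=
        Finset.sum_congr rfl fun _ _ => Finset.sum_comm

lemma expand {k p : ℕ} (M : Matrix (Fin (k+p)) (Fin (k+p)) ℝ)
    (σ τ : Perm (Fin (k+p))) :
    ((Equiv.Perm.sign σ : ℤ) : ℝ) * ((Equiv.Perm.sign τ : ℤ) : ℝ) *
        (Matrix.of fun i j : Fin k => M (σ (Fin.castAdd p i)) (τ (Fin.castAdd p j))).det *
        (Matrix.of fun i j : Fin p => M (σ (Fin.natAdd k i)) (τ (Fin.natAdd k j))).det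
    = ∑ π : Perm (Fin k), ∑ ρ : Perm (Fin p),
        (((Equiv.Perm.sign σ : ℤ) : ℝ) * ((Equiv.Perm.sign τ : ℤ) : ℝ) *
            (((Equiv.Perm.sign π : ℤ) : ℝ) * ((Equiv.Perm.sign ρ : ℤ) : ℝ))) *
          ((∏ i, M (σ (Fin.castAdd p (π i))) (τ (Fin.castAdd p i))) *
           (∏ j, M (σ (Fin.natAdd k (ρ j))) (τ (Fin.natAdd k j)))) := by
  rw [det_apply' (R := ℝ), det_apply' (R := ℝ)]
  simp only [Matrix.of_apply, Finset.mul_sum, Finset.sum_mul]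
  rw [Finset.sum_comm]
  refine Finset.sum_congr rfl fun π _ => Finset.sum_congr rfl fun ρ _ => ?_
  ring

lemma key {k p : ℕ} (M : Matrix (Fin (k+p)) (Fin (k+p)) ℝ) :
    ∑ σ : Perm (Fin (k+p)), ∑ τ : Perm (Fin (k+p)),
      ((Equiv.Perm.sign σ : ℤ) : ℝ) * ((Equiv.Perm.sign τ : ℤ) : ℝ) *
        (Matrix.of fun i j : Fin k => M (σ (Fin.castAdd p i)) (τ (Fin.castAdd p j))).det *
        (Matrix.of fun i j : Fin p => M (σ (Fin.natAdd k i)) (τ (Fin.natAdd k j))).det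
    = (k.factorial : ℝ) * (p.factorial : ℝ) * ((k+p).factorial : ℝ) * M.det := by
  calc ∑ σ : Perm (Fin (k+p)), ∑ τ : Perm (Fin (k+p)),
      ((Equiv.Perm.sign σ : ℤ) : ℝ) * ((Equiv.Perm.sign τ : ℤ) : ℝ) *
        (Matrix.of fun i j : Fin k => M (σ (Fin.castAdd p i)) (τ (Fin.castAdd p j))).det *
        (Matrix.of fun i j : Fin p => M (σ (Fin.natAdd k i)) (τ (Fin.natAdd k j))).det
      = ∑ σ : Perm (Fin (k+p)), ∑ τ : Perm (Fin (k+p)), ∑ π : Perm (Fin k), ∑ ρ : Perm (Fin p),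
        (((Equiv.Perm.sign σ : ℤ) : ℝ) * ((Equiv.Perm.sign τ : ℤ) : ℝ) *
            (((Equiv.Perm.sign π : ℤ) : ℝ) * ((Equiv.Perm.sign ρ : ℤ) : ℝ))) *
          ((∏ i, M (σ (Fin.castAdd p (π i))) (τ (Fin.castAdd p i))) *
           (∏ j, M (σ (Fin.natAdd k (ρ j))) (τ (Fin.natAdd k j)))) :=
        Finset.sum_congr rfl fun σ _ => Finset.sum_congr rfl fun τ _ => expand M σ τ
    _ = ∑ π : Perm (Fin k), ∑ ρ : Perm (Fin p), ∑ σ : Perm (Fin (k+p)), ∑ τ : Perm (Fin (k+p)),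
        (((Equiv.Perm.sign σ : ℤ) : ℝ) * ((Equiv.Perm.sign τ : ℤ) : ℝ) *
            (((Equiv.Perm.sign π : ℤ) : ℝ) * ((Equiv.Perm.sign ρ : ℤ) : ℝ))) *
          ((∏ i, M (σ (Fin.castAdd p (π i))) (τ (Fin.castAdd p i))) *
           (∏ j, M (σ (Fin.natAdd k (ρ j))) (τ (Fin.natAdd k j)))) := sum_swap4 _
    _ = ∑ _π : Perm (Fin k), ∑ _ρ : Perm (Fin p), ∑ σ : Perm (Fin (k+p)), ∑ τ : Perm (Fin (k+p)),
        ((Equiv.Perm.sign σ : ℤ) : ℝ) * ((Equiv.Perm.sign τ : ℤ) : ℝ) * ∏ z, M (σ z) (τ z) :=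
        Finset.sum_congr rfl fun π _ => Finset.sum_congr rfl fun ρ _ => step_sigma M π ρ
    _ = (k.factorial : ℝ) * (p.factorial : ℝ) * ((k+p).factorial : ℝ) * M.det := by
        rw [key2 M]
        simp [Finset.sum_const, Fintype.card_perm, nsmul_eq_mul]
        ring

lemma dmul_D (n k p : ℕ) (c d : ℝ) :
    dmul (n := n) (fun X Y => c * D n k X Y) (fun X Y => d * D n p X Y)
      = fun X Y => (c * d * (((k+p).factorial : ℝ) / ((k.factorial : ℝ) * (p.factorial : ℝ)))) *
          D n (k+p) X Y := by
  funext X Y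
  have hM : ∀ (σ τ : Perm (Fin (k+p))),
      (D n k (fun i => X (σ (Fin.castAdd p i))) (fun j => Y (τ (Fin.castAdd p j))))
      = (Matrix.of fun i j : Fin k =>
          (Matrix.of fun i' j' => if X i' = Y j' then (1:ℝ) else 0)
            (σ (Fin.castAdd p i)) (τ (Fin.castAdd p j))).det := by
    intro σ τ
    simp [D]
  have hM2 : ∀ (σ τ : Perm (Fin (k+p))),
      (D n p (fun i => X (σ (Fin.natAdd k i))) (fun j => Y (τ (Fin.natAdd k j))))
      = (Matrix.of fun i j : Fin p =>
          (Matrix.of fun i' j' => if X i' = Y j' then (1:ℝ) else 0)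
            (σ (Fin.natAdd k i)) (τ (Fin.natAdd k j))).det := by
    intro σ τ
    simp [D]
  show (1 / ((Nat.factorial k * Nat.factorial k * Nat.factorial p * Nat.factorial p : ℕ) : ℝ)) *
      ∑ σ : Perm (Fin (k + p)), ∑ τ : Perm (Fin (k + p)),
        ((Equiv.Perm.sign σ : ℤ) : ℝ) * ((Equiv.Perm.sign τ : ℤ) : ℝ) *
          (c * D n k (fun i => X (σ (Fin.castAdd p i))) (fun j => Y (τ (Fin.castAdd p j)))) *
          (d * D n p (fun i => X (σ (Fin.natAdd k i))) (fun j => Y (τ (Fin.natAdd k j))))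
      = _
  have hpull : ∑ σ : Perm (Fin (k + p)), ∑ τ : Perm (Fin (k + p)),
        ((Equiv.Perm.sign σ : ℤ) : ℝ) * ((Equiv.Perm.sign τ : ℤ) : ℝ) *
          (c * D n k (fun i => X (σ (Fin.castAdd p i))) (fun j => Y (τ (Fin.castAdd p j)))) *
          (d * D n p (fun i => X (σ (Fin.natAdd k i))) (fun j => Y (τ (Fin.natAdd k j))))
      = (c * d) * ∑ σ : Perm (Fin (k + p)), ∑ τ : Perm (Fin (k + p)),
        ((Equiv.Perm.sign σ : ℤ) : ℝ) * ((Equiv.Perm.sign τ : ℤ) : ℝ) *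
          (Matrix.of fun i j : Fin k =>
            (Matrix.of fun i' j' => if X i' = Y j' then (1:ℝ) else 0)
              (σ (Fin.castAdd p i)) (τ (Fin.castAdd p j))).det *
          (Matrix.of fun i j : Fin p =>
            (Matrix.of fun i' j' => if X i' = Y j' then (1:ℝ) else 0)
              (σ (Fin.natAdd k i)) (τ (Fin.natAdd k j))).det := by
    rw [Finset.mul_sum]
    refine Finset.sum_congr rfl fun σ _ => ?_
    rw [Finset.mul_sum]
    refine Finset.sum_congr rfl fun τ _ => ?_
    rw [hM σ τ, hM2 σ τ]
    ring
  rw [hpull, key]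
  have h1 : ((k.factorial : ℝ)) ≠ 0 := Nat.cast_ne_zero.mpr (Nat.factorial_ne_zero k)
  have h2 : ((p.factorial : ℝ)) ≠ 0 := Nat.cast_ne_zero.mpr (Nat.factorial_ne_zero p)
  have hD : D n (k+p) X Y = (Matrix.of fun i' j' => if X i' = Y j' then (1:ℝ) else 0).det := rfl
  rw [hD]
  push_cast
  field_simp

lemma gDF_eq (n : ℕ) : gDF n = fun X Y => (1:ℝ) * D n 1 X Y := by
  funext X Y
  simp [gDF, D, Matrix.det_fin_one]

lemma Rbody_eq (n : ℕ) (a : ℝ) :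
    (fun X Y => (a / 2) * dmul (gDF n) (gDF n) X Y) = fun X Y => a * D n 2 X Y := by
  rw [gDF_eq, dmul_D n 1 1 1 1]
  funext X Y
  show (a / 2) * ((1 * 1 * (((1+1).factorial : ℝ) / ((Nat.factorial 1 : ℝ) * (Nat.factorial 1 : ℝ)))) * D n (1+1) X Y) = _
  norm_num [Nat.factorial]
  ring

lemma dpow_R (n : ℕ) (a : ℝ) (h : ℕ) :
    dpow (n := n) (fun X Y => a * D n 2 X Y) h
      = fun X Y => ((a/2)^h * ((2*h).factorial : ℝ)) * D n (2*h) X Y := by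
  induction h with
  | zero =>
      funext X Y
      show (1:ℝ) = _
      simp [D, Matrix.det_fin_zero]
  | succ h ih =>
      have hstep : dpow (n := n) (fun X Y => a * D n 2 X Y) (h+1)
          = dmul (dpow (n := n) (fun X Y => a * D n 2 X Y) h) (fun X Y => a * D n 2 X Y) := rfl
      rw [hstep, ih, dmul_D n (2*h) 2 _ a]
      funext X Y
      have e1 : 2*(h+1) = 2*h+2 := by ring
      have hD : D n (2*(h+1)) X Y = D n (2*h+2) X Y := rfl
      rw [hD]
      have hfac : ((2*h+2).factorial : ℝ)
          = ((2*h+2) : ℝ) * (((2*h+1) : ℝ) * ((2*h).factorial : ℝ)) := by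
        rw [show 2*h+2 = (2*h+1)+1 from rfl, Nat.factorial_succ, Nat.factorial_succ]
        push_cast
        ring
      rw [show (2*(h+1)).factorial = (2*h+2).factorial from by rw [e1]]
      rw [hfac]
      have h1 : (((2*h).factorial : ℝ)) ≠ 0 := Nat.cast_ne_zero.mpr (Nat.factorial_ne_zero _)
      field_simp
      ring

lemma sum_D_diag (n p : ℕ) : ∑ f : Fin p → Fin n, D n p f f = (n.descFactorial p : ℝ) := by
  have hterm : ∀ f : Fin p → Fin n, D n p f f = if Function.Injective f then (1:ℝ) else 0 := by
    intro f
    by_cases hf : Function.Injective f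
    · simp only [hf, if_true]
      have : (Matrix.of fun i j => if f i = f j then (1:ℝ) else 0) = 1 := by
        ext i j
        simp [Matrix.one_apply, hf.eq_iff]
      show (Matrix.of fun i j => if f i = f j then (1:ℝ) else 0).det = 1
      rw [this, Matrix.det_one]
    · simp only [hf, if_false]
      rw [Function.not_injective_iff] at hf
      obtain ⟨i, j, hfij, hij⟩ := hf
      refine Matrix.det_zero_of_row_eq hij ?_
      funext j'
      simp [hfij]
  simp only [hterm]
  rw [Finset.sum_boole]
  have : (Finset.univ.filter fun f : Fin p → Fin n => Function.Injective f).card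
      = n.descFactorial p := by
    rw [← Fintype.card_subtype]
    rw [Fintype.card_congr (Equiv.subtypeInjectiveEquivEmbedding (Fin p) (Fin n))]
    rw [Fintype.card_embedding_eq]
    simp
  rw [this]


end GaussBonnetAux

open GaussBonnetAux

/-- For an even-dimensional inner product space of dimension `m`, if the curvature
tensor is that of constant sectional curvature `a`, i.e. `R = (a/2) (g ⊘ g)` as a
`(2,2)`-double form, then the Gauss–Bonnet density
`(1/(m! (m/2)!)) C^m(R^(m/2))` equals `(a/2)^(m/2) * m!/((m/2)!)`. -/
theorem gauss_bonnet_density_space_form (m : ℕ) (hm : Even m) (a : ℝ)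
    (R : DF m 2 2) (hR : R = fun X Y => (a / 2) * dmul (gDF m) (gDF m) X Y) :
    (1 / ((Nat.factorial m : ℝ) * (Nat.factorial (m / 2) : ℝ))) * fullContr (dpow R (m / 2)) =
      (a / 2) ^ (m / 2) * (Nat.factorial m : ℝ) / (Nat.factorial (m / 2) : ℝ) := by
  obtain ⟨h, rfl⟩ := hm
  have hm2 : (h + h) / 2 = h := by omega
  rw [hm2, hR, Rbody_eq, dpow_R]
  show (1 / ((Nat.factorial (h+h) : ℝ) * (Nat.factorial h : ℝ))) *
      (∑ f : Fin (2*h) → Fin (h+h), ((a/2)^h * ((2*h).factorial : ℝ)) * D (h+h) (2*h) f f) = _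
  rw [← Finset.mul_sum, sum_D_diag (h+h) (2*h)]
  rw [show 2*h = h+h from two_mul h, Nat.descFactorial_self]
  have h1 : ((Nat.factorial (h+h) : ℝ)) ≠ 0 := Nat.cast_ne_zero.mpr (Nat.factorial_ne_zero _)
  have h2 : ((Nat.factorial h : ℝ)) ≠ 0 := Nat.cast_ne_zero.mpr (Nat.factorial_ne_zero _)
  field_simp
end

section
/- On an n-dimensional real inner product space, the full contraction of the q-th double-wedge power of the metric satisfies C^q(g^q) = n! * q! / (n-q)! = binom(n, q) * (q!)^2, for every 0 ≤ q ≤ n. -/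
open Finset

open GaussBonnet

namespace GaussBonnetAux

open Equiv Equiv.Perm

/-- Extension of a permutation of `Fin m` to `Fin (m+1)` fixing the last element. -/
def ext1 {m : ℕ} (π : Perm (Fin m)) : Perm (Fin (m + 1)) :=
  finSumFinEquiv.permCongr (Equiv.sumCongr π (Equiv.refl (Fin 1)))

@[simp] lemma ext1_castAdd {m : ℕ} (π : Perm (Fin m)) (i : Fin m) :
    ext1 π (Fin.castAdd 1 i) = Fin.castAdd 1 (π i) := by
  simp [ext1, Equiv.permCongr_apply, finSumFinEquiv_symm_apply_castAdd]

@[simp] lemma ext1_natAdd {m : ℕ} (π : Perm (Fin m)) (j : Fin 1) :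
    ext1 π (Fin.natAdd m j) = Fin.natAdd m j := by
  simp [ext1, Equiv.permCongr_apply, finSumFinEquiv_symm_apply_natAdd]

@[simp] lemma sign_ext1 {m : ℕ} (π : Perm (Fin m)) : sign (ext1 π) = sign π := by
  simp [ext1, Equiv.Perm.sign_permCongr, Equiv.Perm.sign_sumCongr]

lemma prod_split {m : ℕ} (f : Fin (m + 1) → ℝ) :
    ∏ i, f i = (∏ i : Fin m, f (Fin.castAdd 1 i)) * f (Fin.natAdd m 0) := by
  rw [Fin.prod_univ_castSucc]; rfl

lemma perm_double_sum {m : ℕ} (M : Fin m → Fin m → ℝ) :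
    ∑ σ : Perm (Fin m), ∑ τ : Perm (Fin m),
      ((sign σ : ℤ) : ℝ) * ((sign τ : ℤ) : ℝ) * ∏ i, M (σ i) (τ i)
    = (Nat.factorial m : ℝ) * ∑ ρ : Perm (Fin m), ((sign ρ : ℤ) : ℝ) * ∏ i, M i (ρ i) := by
  have key : ∀ σ : Perm (Fin m),
      (∑ τ : Perm (Fin m), ((sign σ : ℤ):ℝ) * ((sign τ:ℤ):ℝ) * ∏ i, M (σ i) (τ i))
      = ∑ ρ : Perm (Fin m), ((sign ρ:ℤ):ℝ) * ∏ i, M i (ρ i) := by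
    intro σ
    rw [← Equiv.sum_comp (Equiv.mulRight σ⁻¹)
      (fun ρ => ((sign ρ:ℤ):ℝ) * ∏ i, M i (ρ i))]
    refine Finset.sum_congr rfl fun ρ _ => ?_
    have h1 : (∏ j, M j (ρ (σ⁻¹ j))) = ∏ i, M (σ i) (ρ i) := by
      rw [← Equiv.prod_comp σ (fun j => M j (ρ (σ⁻¹ j)))]
      simp
    simp only [Equiv.coe_mulRight, Equiv.Perm.mul_apply, Equiv.Perm.sign_mul,
      Equiv.Perm.sign_inv, Units.val_mul, Int.cast_mul, h1]
    ring
  rw [Finset.sum_congr rfl fun σ _ => key σ, Finset.sum_const]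
  simp [Fintype.card_perm, mul_comm]

lemma step_lemma (m : ℕ) (M : Fin (m + 1) → Fin (m + 1) → ℝ) :
    ∑ σ : Perm (Fin (m + 1)), ∑ τ : Perm (Fin (m + 1)),
      ((sign σ : ℤ) : ℝ) * ((sign τ : ℤ) : ℝ) *
        ((Nat.factorial m : ℝ) * ∑ π : Perm (Fin m), ((sign π : ℤ) : ℝ) *
          ∏ i, M (σ (Fin.castAdd 1 i)) (τ (Fin.castAdd 1 (π i)))) *
        M (σ (Fin.natAdd m 0)) (τ (Fin.natAdd m 0))
    = (Nat.factorial m : ℝ) * (Nat.factorial m : ℝ) * (Nat.factorial (m + 1) : ℝ) *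
        ∑ ρ : Perm (Fin (m + 1)), ((sign ρ : ℤ) : ℝ) * ∏ i, M i (ρ i) := by
  have step1 : ∀ σ : Perm (Fin (m + 1)),
      (∑ τ : Perm (Fin (m + 1)), ((sign σ:ℤ):ℝ) * ((sign τ:ℤ):ℝ) *
        ((Nat.factorial m : ℝ) * ∑ π : Perm (Fin m), ((sign π:ℤ):ℝ) *
          ∏ i, M (σ (Fin.castAdd 1 i)) (τ (Fin.castAdd 1 (π i)))) *
        M (σ (Fin.natAdd m 0)) (τ (Fin.natAdd m 0)))
      = (Nat.factorial m : ℝ) * (Nat.factorial m : ℝ) *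
        ∑ τ : Perm (Fin (m + 1)), ((sign σ:ℤ):ℝ) * ((sign τ:ℤ):ℝ) *
          ∏ i : Fin (m + 1), M (σ i) (τ i) := by
    intro σ
    have e2 : ∀ τ : Perm (Fin (m + 1)),
        ((sign σ:ℤ):ℝ) * ((sign τ:ℤ):ℝ) *
          ((Nat.factorial m : ℝ) * ∑ π : Perm (Fin m), ((sign π:ℤ):ℝ) *
            ∏ i, M (σ (Fin.castAdd 1 i)) (τ (Fin.castAdd 1 (π i)))) *
          M (σ (Fin.natAdd m 0)) (τ (Fin.natAdd m 0))
        = (Nat.factorial m : ℝ) * ∑ π : Perm (Fin m),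
            ((sign σ:ℤ):ℝ) * (((sign π:ℤ):ℝ) * ((sign τ:ℤ):ℝ) *
              (∏ i, M (σ (Fin.castAdd 1 i)) (τ (Fin.castAdd 1 (π i)))) *
              M (σ (Fin.natAdd m 0)) (τ (Fin.natAdd m 0))) := by
      intro τ
      simp only [Finset.mul_sum, Finset.sum_mul]
      refine Finset.sum_congr rfl fun π _ => ?_
      ring
    rw [Finset.sum_congr rfl fun τ _ => e2 τ, ← Finset.mul_sum, Finset.sum_comm]
    have e3 : ∀ π : Perm (Fin m),
        (∑ τ : Perm (Fin (m + 1)),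
          ((sign σ:ℤ):ℝ) * (((sign π:ℤ):ℝ) * ((sign τ:ℤ):ℝ) *
            (∏ i, M (σ (Fin.castAdd 1 i)) (τ (Fin.castAdd 1 (π i)))) *
            M (σ (Fin.natAdd m 0)) (τ (Fin.natAdd m 0))))
        = ∑ τ : Perm (Fin (m + 1)), ((sign σ:ℤ):ℝ) * ((sign τ:ℤ):ℝ) *
            ∏ i : Fin (m + 1), M (σ i) (τ i) := by
      intro π
      rw [← Equiv.sum_comp (Equiv.mulRight (ext1 π))
        (fun τ => ((sign σ:ℤ):ℝ) * ((sign τ:ℤ):ℝ) * ∏ i : Fin (m + 1), M (σ i) (τ i))]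
      refine Finset.sum_congr rfl fun τ _ => ?_
      simp only [Equiv.coe_mulRight]
      rw [prod_split (fun i => M (σ i) ((τ * ext1 π) i))]
      simp only [Equiv.Perm.mul_apply, ext1_castAdd, ext1_natAdd,
        Equiv.Perm.sign_mul, sign_ext1, Units.val_mul, Int.cast_mul]
      ring
    rw [Finset.sum_congr rfl fun π _ => e3 π, Finset.sum_const]
    simp [Fintype.card_perm]
    ring
  rw [Finset.sum_congr rfl fun σ _ => step1 σ, ← Finset.mul_sum, perm_double_sum]
  ring

lemma dpow_gDF_apply (n : ℕ) (q : ℕ) :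
    ∀ X Y : Fin (1 * q) → Fin n,
      dpow (gDF n) q X Y = (Nat.factorial q : ℝ) *
        ∑ π : Perm (Fin (1 * q)), ((sign π : ℤ) : ℝ) *
          ∏ i, (if X i = Y (π i) then (1 : ℝ) else 0) := by
  induction q with
  | zero =>
      intro X Y
      show (1 : ℝ) = _
      simp
  | succ q ih =>
      show ∀ X Y : Fin (1 * q + 1) → Fin n,
        dpow (gDF n) (q + 1) X Y = (Nat.factorial (q + 1) : ℝ) *
          ∑ π : Perm (Fin (1 * q + 1)), ((sign π : ℤ) : ℝ) *
            ∏ i, (if X i = Y (π i) then (1 : ℝ) else 0)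
      intro X Y
      have hfac : ((Nat.factorial (1 * q) : ℕ) : ℝ) = (Nat.factorial q : ℝ) := by norm_num
      have e1 : dpow (gDF n) (q + 1) X Y
          = (1 / ((Nat.factorial (1 * q) * Nat.factorial (1 * q) *
                Nat.factorial 1 * Nat.factorial 1 : ℕ) : ℝ)) *
            ∑ σ : Perm (Fin (1 * q + 1)), ∑ τ : Perm (Fin (1 * q + 1)),
              ((sign σ : ℤ) : ℝ) * ((sign τ : ℤ) : ℝ) *
                dpow (gDF n) q (fun i => X (σ (Fin.castAdd 1 i)))
                  (fun j => Y (τ (Fin.castAdd 1 j))) *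
                (if X (σ (Fin.natAdd (1 * q) 0)) = Y (τ (Fin.natAdd (1 * q) 0)) then (1:ℝ)
                  else 0) := rfl
      simp only [ih] at e1
      rw [← hfac] at e1
      have key : (∑ σ : Perm (Fin (1 * q + 1)), ∑ τ : Perm (Fin (1 * q + 1)),
              ((sign σ : ℤ) : ℝ) * ((sign τ : ℤ) : ℝ) *
                ((Nat.factorial (1 * q) : ℝ) *
                  ∑ π : Perm (Fin (1 * q)), ((sign π : ℤ) : ℝ) *
                    ∏ i, (if X (σ (Fin.castAdd 1 i)) = Y (τ (Fin.castAdd 1 (π i))) then (1:ℝ)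
                      else 0)) *
                (if X (σ (Fin.natAdd (1 * q) 0)) = Y (τ (Fin.natAdd (1 * q) 0)) then (1:ℝ)
                  else 0))
          = (Nat.factorial (1 * q) : ℝ) * (Nat.factorial (1 * q) : ℝ) *
              (Nat.factorial (1 * q + 1) : ℝ) *
              ∑ ρ : Perm (Fin (1 * q + 1)), ((sign ρ : ℤ) : ℝ) *
                ∏ i, (if X i = Y (ρ i) then (1:ℝ) else 0) :=
        step_lemma (1 * q) (fun a b => if X a = Y b then (1:ℝ) else 0)
      rw [key] at e1
      rw [e1, ← mul_assoc]
      congr 1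
      have h0 : (1 : ℕ) * q = q := one_mul q
      rw [h0]
      have hne : (Nat.factorial q : ℝ) ≠ 0 := Nat.cast_ne_zero.2 q.factorial_ne_zero
      push_cast
      field_simp
      simp

end GaussBonnetAux

open GaussBonnetAux in
/-- On an `n`-dimensional real inner product space, the full contraction of the `q`-th
double-wedge power of the metric satisfies
`C^q(g^q) = n! q!/(n-q)! = binom(n,q) (q!)^2`, for `0 ≤ q ≤ n`. -/
theorem fullContr_g_pow (n q : ℕ) (hq : q ≤ n) :
    fullContr (dpow (gDF n) q) =
        (Nat.factorial n : ℝ) * (Nat.factorial q : ℝ) / (Nat.factorial (n - q) : ℝ) ∧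
      fullContr (dpow (gDF n) q) = (Nat.choose n q : ℝ) * (Nat.factorial q : ℝ) ^ 2 := by
  classical
  have hdesc : fullContr (dpow (gDF n) q)
      = (Nat.factorial q : ℝ) * (Nat.descFactorial n q : ℝ) := by
    have h0 : fullContr (dpow (gDF n) q) = ∑ f : Fin (1 * q) → Fin n, dpow (gDF n) q f f := rfl
    rw [h0]
    simp only [dpow_gDF_apply n q]
    rw [← Finset.mul_sum]
    congr 1
    have hdet : ∀ f : Fin (1 * q) → Fin n,
        (∑ π : Equiv.Perm (Fin (1 * q)), ((Equiv.Perm.sign π : ℤ) : ℝ) *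
          ∏ i, (if f i = f (π i) then (1:ℝ) else 0))
        = if Function.Injective f then (1:ℝ) else 0 := by
      intro f
      have hdet1 : (∑ π : Equiv.Perm (Fin (1 * q)), ((Equiv.Perm.sign π : ℤ) : ℝ) *
            ∏ i, (if f i = f (π i) then (1:ℝ) else 0))
          = Matrix.det (Matrix.of fun i j : Fin (1 * q) =>
              if f i = f j then (1:ℝ) else 0) := by
        rw [Matrix.det_apply]
        refine Finset.sum_congr rfl fun π _ => ?_
        rw [Units.smul_def, zsmul_eq_mul]
        congr 1
        refine Finset.prod_congr rfl fun i _ => ?_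
        rw [Matrix.of_apply]
        exact if_congr eq_comm rfl rfl
      by_cases hinj : Function.Injective f
      · rw [if_pos hinj, hdet1]
        have hone : (Matrix.of fun i j : Fin (1 * q) => if f i = f j then (1:ℝ) else 0)
            = (1 : Matrix (Fin (1 * q)) (Fin (1 * q)) ℝ) := by
          ext i j
          simp [Matrix.one_apply, hinj.eq_iff]
        rw [hone, Matrix.det_one]
      · rw [if_neg hinj, hdet1]
        obtain ⟨a, b, hab, hne⟩ := Function.not_injective_iff.1 hinj
        refine Matrix.det_zero_of_row_eq hne ?_
        funext k
        simp only [Matrix.of_apply]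
        rw [hab]
    rw [Finset.sum_congr rfl fun f _ => hdet f, Finset.sum_boole]
    have hcard : (Finset.univ.filter
          (fun f : Fin (1 * q) → Fin n => Function.Injective f)).card
        = Nat.descFactorial n q := by
      rw [← Fintype.card_subtype]
      rw [Fintype.card_congr (Equiv.subtypeInjectiveEquivEmbedding (Fin (1 * q)) (Fin n))]
      rw [Fintype.card_embedding_eq, Fintype.card_fin, Fintype.card_fin, one_mul]
    rw [hcard]
  have hc : (Nat.choose n q : ℝ) * (Nat.factorial q : ℝ) * (Nat.factorial (n - q) : ℝ)
      = (Nat.factorial n : ℝ) := by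
    exact_mod_cast congrArg (Nat.cast (R := ℝ)) (Nat.choose_mul_factorial_mul_factorial hq)
  have hd : (Nat.descFactorial n q : ℝ) = (Nat.factorial q : ℝ) * (Nat.choose n q : ℝ) := by
    exact_mod_cast congrArg (Nat.cast (R := ℝ)) (Nat.descFactorial_eq_factorial_mul_choose n q)
  have hne : (Nat.factorial (n - q) : ℝ) ≠ 0 := Nat.cast_ne_zero.2 (n - q).factorial_ne_zero
  constructor
  · rw [hdesc, hd]
    field_simp
    linear_combination hc
  · rw [hdesc, hd]
    ring
end

section
/- On an n-dimensional real inner product space, for every (p,p)-double form ψ and every 1 ≤ q ≤ n - p, the full contraction satisfies C^(p+q)(ψ ⊘ g^q) = (∏_{j=1}^q (p+j)(n-p+1-j)) * C^p(ψ) = (q!)^2 * binom(p+q, q) * binom(n-p, q) * C^p(ψ). -/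
open Finset

open GaussBonnet Finset

section Helpers
open Equiv
namespace GB
variable {n : ℕ}


noncomputable def sgn {N : ℕ} (σ : Perm (Fin N)) : ℝ := ((Perm.sign σ : ℤ) : ℝ)

lemma sgn_mul_self {N : ℕ} (σ : Perm (Fin N)) : sgn σ * sgn σ = 1 := by
  unfold sgn
  rcases Int.units_eq_one_or (Perm.sign σ) with h | h <;> rw [h] <;> norm_num

lemma sgn_mul {N : ℕ} (σ τ : Perm (Fin N)) : sgn (σ * τ) = sgn σ * sgn τ := by
  unfold sgn; rw [map_mul]; push_cast; ring

lemma sgn_inv {N : ℕ} (σ : Perm (Fin N)) : sgn σ⁻¹ = sgn σ := by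
  unfold sgn; rw [Equiv.Perm.sign_inv]

lemma sgn_one {N : ℕ} : sgn (1 : Perm (Fin N)) = 1 := by
  unfold sgn; simp

def emb {a b : ℕ} (π : Perm (Fin a)) (ρ : Perm (Fin b)) : Perm (Fin (a + b)) :=
  finSumFinEquiv.permCongr (Equiv.sumCongr π ρ)

@[simp] lemma emb_castAdd {a b : ℕ} (π : Perm (Fin a)) (ρ : Perm (Fin b)) (i : Fin a) :
    emb π ρ (Fin.castAdd b i) = Fin.castAdd b (π i) := by
  simp [emb, Equiv.permCongr_apply]

@[simp] lemma emb_natAdd {a b : ℕ} (π : Perm (Fin a)) (ρ : Perm (Fin b)) (j : Fin b) :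
    emb π ρ (Fin.natAdd a j) = Fin.natAdd a (ρ j) := by
  simp [emb, Equiv.permCongr_apply]

lemma sgn_emb {a b : ℕ} (π : Perm (Fin a)) (ρ : Perm (Fin b)) :
    sgn (emb π ρ) = sgn π * sgn ρ := by
  unfold sgn emb
  rw [Equiv.Perm.sign_permCongr, Equiv.Perm.sign_sumCongr]
  push_cast; ring

lemma last_eq_natAdd {N : ℕ} : Fin.last N = Fin.natAdd N (0 : Fin 1) := by
  ext; simp

lemma natAdd_castSucc {p m : ℕ} (i : Fin m) :
    Fin.natAdd p (Fin.castSucc i) = Fin.castSucc (Fin.natAdd p i) := by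
  ext; simp

lemma castAdd_succ {p m : ℕ} (j : Fin p) :
    (Fin.castAdd (m + 1) j : Fin (p + (m + 1))) = Fin.castSucc (Fin.castAdd m j) := by
  ext; simp

/-- extend a permutation of `Fin N` to `Fin (N+1)` fixing the last element. -/
def extL {N : ℕ} (ρ : Perm (Fin N)) : Perm (Fin (N + 1)) := emb ρ (1 : Perm (Fin 1))

lemma emb_one_last {N : ℕ} (ρ : Perm (Fin N)) : extL ρ (Fin.last N) = Fin.last N := by
  rw [extL, last_eq_natAdd, emb_natAdd]; rfl

lemma emb_one_castSucc {N : ℕ} (ρ : Perm (Fin N)) (i : Fin N) :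
    extL ρ (Fin.castSucc i) = Fin.castSucc (ρ i) := by
  have h : (Fin.castSucc i : Fin (N + 1)) = Fin.castAdd 1 i := rfl
  rw [extL, h, emb_castAdd]; rfl

lemma sgn_extL {N : ℕ} (ρ : Perm (Fin N)) : sgn (extL ρ) = sgn ρ := by
  rw [extL, sgn_emb, sgn_one, mul_one]

/-- decomposition of a permutation of `Fin (N+1)` by the image of `last`. -/
lemma sum_perm_succ {N : ℕ} (F : Perm (Fin (N + 1)) → ℝ) :
    ∑ ρ : Perm (Fin (N + 1)), F ρ =
      ∑ a : Fin (N + 1), ∑ ρ' : Perm (Fin N), F (Equiv.swap (Fin.last N) a * extL ρ') := by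
  have main : ∑ x : Fin (N + 1) × Perm (Fin N),
      F (Equiv.swap (Fin.last N) x.1 * extL x.2) = ∑ ρ : Perm (Fin (N + 1)), F ρ := by
    apply Fintype.sum_bijective
      (fun x : Fin (N + 1) × Perm (Fin N) => Equiv.swap (Fin.last N) x.1 * extL x.2) ?_ _ _
      (fun x => rfl)
    rw [Fintype.bijective_iff_injective_and_card]
    constructor
    · rintro ⟨a, ρ⟩ ⟨b, τ⟩ h
      have ha : (Equiv.swap (Fin.last N) a * extL ρ) (Fin.last N) = a := by
        simp [Perm.mul_apply, emb_one_last]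
      have hb : (Equiv.swap (Fin.last N) b * extL τ) (Fin.last N) = b := by
        simp [Perm.mul_apply, emb_one_last]
      have h' : Equiv.swap (Fin.last N) a * extL ρ = Equiv.swap (Fin.last N) b * extL τ := h
      have hab : a = b := by rw [← ha, ← hb, h']
      subst hab
      have h2 : extL ρ = extL τ := mul_left_cancel h'
      have h3 : ρ = τ := by
        apply Equiv.ext
        intro i
        have h4 := congrArg (fun e : Perm (Fin (N + 1)) => e (Fin.castSucc i)) h2
        simp only [emb_one_castSucc] at h4
        exact Fin.castSucc_injective _ h4
      rw [h3]
    · simp [Fintype.card_perm, Nat.factorial_succ]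
  rw [← main, Fintype.sum_prod_type]



lemma sum_fn_succ {N : ℕ} (G : (Fin (N + 1) → Fin n) → ℝ) :
    ∑ f : Fin (N + 1) → Fin n, G f =
      ∑ f₀ : Fin N → Fin n, ∑ v : Fin n, G (Fin.snoc f₀ v) := by
  have main : ∑ x : (Fin N → Fin n) × Fin n, G (Fin.snoc x.1 x.2 : Fin (N + 1) → Fin n) =
      ∑ f : Fin (N + 1) → Fin n, G f := by
    apply Fintype.sum_bijective (fun x : (Fin N → Fin n) × Fin n => (Fin.snoc x.1 x.2 : Fin (N + 1) → Fin n)) ?_ _ _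
      (fun x => rfl)
    rw [Fintype.bijective_iff_injective_and_card]
    constructor
    · rintro ⟨f, v⟩ ⟨g, w⟩ h
      have h1 : f = g := by
        funext i
        have := congrFun h (Fin.castSucc i)
        simpa [Fin.snoc_castSucc] using this
      have h2 : v = w := by
        have := congrFun h (Fin.last N)
        simpa [Fin.snoc_last] using this
      rw [h1, h2]
    · simp [Fintype.card_fun, pow_succ]
  rw [← main, Fintype.sum_prod_type]

/-- The key auxiliary sum. -/
noncomputable def Uaux {p : ℕ} (ψ : DF n p p) (m : ℕ) : ℝ :=
  ∑ ρ : Perm (Fin (p + m)), ∑ f : Fin (p + m) → Fin n,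
    sgn ρ * ψ (fun i => f (Fin.castAdd m i)) (fun i => f (ρ (Fin.castAdd m i))) *
      ∏ i : Fin m, (if f (Fin.natAdd p i) = f (ρ (Fin.natAdd p i)) then (1 : ℝ) else 0)

lemma Uaux_zero {p : ℕ} (ψ : DF n p p) (hψ : IsAlt ψ) :
    Uaux ψ 0 = (Nat.factorial p : ℝ) * fullContr ψ := by
  unfold Uaux
  have key : ∀ (ρ : Perm (Fin (p + 0))) (f : Fin (p + 0) → Fin n),
      sgn ρ * ψ (fun i => f (Fin.castAdd 0 i)) (fun i => f (ρ (Fin.castAdd 0 i))) *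
        ∏ i : Fin 0, (if f (Fin.natAdd p i) = f (ρ (Fin.natAdd p i)) then (1 : ℝ) else 0)
      = ψ f f := by
    intro ρ f
    have h5 : ψ (fun i => f (Fin.castAdd 0 i)) (fun i => f (ρ (Fin.castAdd 0 i)))
        = sgn (1 : Perm (Fin p)) * sgn ρ * ψ f f := hψ 1 ρ f f
    rw [Fin.prod_univ_zero, mul_one, h5, sgn_one, one_mul, ← mul_assoc, sgn_mul_self, one_mul]
  simp only [key]
  rw [Finset.sum_const, fullContr]
  simp [Fintype.card_perm, mul_comm]



lemma natAdd_last {p m : ℕ} : Fin.natAdd p (Fin.last m) = Fin.last (p + m) := by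
  ext; simp

lemma swap_last_castSucc {N : ℕ} (a₀ x : Fin N) :
    Equiv.swap (Fin.last N) (Fin.castSucc a₀) (Fin.castSucc x)
      = if x = a₀ then Fin.last N else Fin.castSucc x := by
  by_cases h : x = a₀
  · subst h; rw [if_pos rfl, Equiv.swap_apply_right]
  · rw [if_neg h, Equiv.swap_apply_of_ne_of_ne (Fin.castSucc_lt_last x).ne
      (fun hc => h (Fin.castSucc_injective _ hc))]

lemma proof_Uaux_succ {p : ℕ} (ψ : DF n p p) (m : ℕ) :
    Uaux ψ (m + 1) = ((n : ℝ) - ((p + m : ℕ) : ℝ)) * Uaux ψ m := by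
  classical
  -- the summand of `Uaux ψ m`
  set B : Perm (Fin (p + m)) → (Fin (p + m) → Fin n) → ℝ := fun ρ f =>
    sgn ρ * ψ (fun i => f (Fin.castAdd m i)) (fun i => f (ρ (Fin.castAdd m i))) *
      ∏ i : Fin m, (if f (Fin.natAdd p i) = f (ρ (Fin.natAdd p i)) then (1 : ℝ) else 0)
    with hB
  have hUm : Uaux ψ m = ∑ ρ : Perm (Fin (p + m)), ∑ f : Fin (p + m) → Fin n, B ρ f := rfl
  have expand : Uaux ψ (m + 1) =
      ∑ ρ : Perm (Fin (p + m + 1)), ∑ f : Fin (p + m + 1) → Fin n,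
        sgn ρ * ψ (fun i => f (Fin.castSucc (Fin.castAdd m i)))
            (fun i => f (ρ (Fin.castSucc (Fin.castAdd m i)))) *
          ((∏ i : Fin m, (if f (Fin.castSucc (Fin.natAdd p i))
                = f (ρ (Fin.castSucc (Fin.natAdd p i))) then (1 : ℝ) else 0)) *
            (if f (Fin.last (p + m)) = f (ρ (Fin.last (p + m))) then (1 : ℝ) else 0)) := by
    refine Finset.sum_congr rfl fun ρ _ => Finset.sum_congr rfl fun f _ => ?_
    rw [Fin.prod_univ_castSucc]
    simp only [castAdd_succ, natAdd_castSucc, natAdd_last]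
  rw [expand, sum_perm_succ]
  simp only [sum_fn_succ]
  rw [Fin.sum_univ_castSucc]
  have hlast : ∑ ρ' : Perm (Fin (p + m)), ∑ f₀ : Fin (p + m) → Fin n, ∑ v : Fin n,
      (sgn (Equiv.swap (Fin.last (p + m)) (Fin.last (p + m)) * extL ρ') *
        ψ (fun i => (Fin.snoc f₀ v : Fin (p+m+1) → Fin n) (Fin.castSucc (Fin.castAdd m i)))
          (fun i => (Fin.snoc f₀ v : Fin (p+m+1) → Fin n)
            ((Equiv.swap (Fin.last (p + m)) (Fin.last (p + m)) * extL ρ')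
              (Fin.castSucc (Fin.castAdd m i)))) *
        ((∏ i : Fin m, (if (Fin.snoc f₀ v : Fin (p+m+1) → Fin n) (Fin.castSucc (Fin.natAdd p i))
              = (Fin.snoc f₀ v : Fin (p+m+1) → Fin n)
                ((Equiv.swap (Fin.last (p + m)) (Fin.last (p + m)) * extL ρ')
                  (Fin.castSucc (Fin.natAdd p i))) then (1 : ℝ) else 0)) *
          (if (Fin.snoc f₀ v : Fin (p+m+1) → Fin n) (Fin.last (p + m))
              = (Fin.snoc f₀ v : Fin (p+m+1) → Fin n)
                ((Equiv.swap (Fin.last (p + m)) (Fin.last (p + m)) * extL ρ') (Fin.last (p + m)))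
            then (1 : ℝ) else 0)))
      = (n : ℝ) * Uaux ψ m := by
    have key : ∀ (ρ' : Perm (Fin (p + m))) (f₀ : Fin (p + m) → Fin n) (v : Fin n),
        (sgn (Equiv.swap (Fin.last (p + m)) (Fin.last (p + m)) * extL ρ') *
          ψ (fun i => (Fin.snoc f₀ v : Fin (p+m+1) → Fin n) (Fin.castSucc (Fin.castAdd m i)))
            (fun i => (Fin.snoc f₀ v : Fin (p+m+1) → Fin n)
              ((Equiv.swap (Fin.last (p + m)) (Fin.last (p + m)) * extL ρ')
                (Fin.castSucc (Fin.castAdd m i)))) *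
          ((∏ i : Fin m, (if (Fin.snoc f₀ v : Fin (p+m+1) → Fin n) (Fin.castSucc (Fin.natAdd p i))
                = (Fin.snoc f₀ v : Fin (p+m+1) → Fin n)
                  ((Equiv.swap (Fin.last (p + m)) (Fin.last (p + m)) * extL ρ')
                    (Fin.castSucc (Fin.natAdd p i))) then (1 : ℝ) else 0)) *
            (if (Fin.snoc f₀ v : Fin (p+m+1) → Fin n) (Fin.last (p + m))
                = (Fin.snoc f₀ v : Fin (p+m+1) → Fin n)
                  ((Equiv.swap (Fin.last (p + m)) (Fin.last (p + m)) * extL ρ') (Fin.last (p + m)))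
              then (1 : ℝ) else 0)))
        = B ρ' f₀ := by
      intro ρ' f₀ v
      rw [Equiv.swap_self]
      simp only [← Equiv.Perm.one_def, one_mul, Equiv.Perm.mul_apply, emb_one_castSucc,
        emb_one_last, Fin.snoc_castSucc, Fin.snoc_last, sgn_extL, if_pos rfl, mul_one, hB]
      split_ifs with h
      · ring
      · exact absurd trivial h
    simp only [key, Finset.sum_const, Finset.card_univ, Fintype.card_fin, nsmul_eq_mul]
    rw [hUm, Finset.mul_sum]
    refine Finset.sum_congr rfl fun ρ' _ => ?_
    rw [Finset.mul_sum]
  have hcs : ∀ a₀ : Fin (p + m), ∀ (ρ' : Perm (Fin (p + m))) (f₀ : Fin (p + m) → Fin n),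
      (∑ v : Fin n, (sgn (Equiv.swap (Fin.last (p + m)) (Fin.castSucc a₀) * extL ρ') *
        ψ (fun i => (Fin.snoc f₀ v : Fin (p+m+1) → Fin n) (Fin.castSucc (Fin.castAdd m i)))
          (fun i => (Fin.snoc f₀ v : Fin (p+m+1) → Fin n)
            ((Equiv.swap (Fin.last (p + m)) (Fin.castSucc a₀) * extL ρ')
              (Fin.castSucc (Fin.castAdd m i)))) *
        ((∏ i : Fin m, (if (Fin.snoc f₀ v : Fin (p+m+1) → Fin n) (Fin.castSucc (Fin.natAdd p i))
              = (Fin.snoc f₀ v : Fin (p+m+1) → Fin n)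
                ((Equiv.swap (Fin.last (p + m)) (Fin.castSucc a₀) * extL ρ')
                  (Fin.castSucc (Fin.natAdd p i))) then (1 : ℝ) else 0)) *
          (if (Fin.snoc f₀ v : Fin (p+m+1) → Fin n) (Fin.last (p + m))
              = (Fin.snoc f₀ v : Fin (p+m+1) → Fin n)
                ((Equiv.swap (Fin.last (p + m)) (Fin.castSucc a₀) * extL ρ') (Fin.last (p + m)))
            then (1 : ℝ) else 0))))
      = -(B ρ' f₀) := by
    intro a₀ ρ' f₀
    have hne : Fin.last (p + m) ≠ Fin.castSucc a₀ := (Fin.castSucc_lt_last a₀).ne'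
    have hsgn : sgn (Equiv.swap (Fin.last (p + m)) (Fin.castSucc a₀) * extL ρ') = -sgn ρ' := by
      rw [sgn_mul, sgn_extL]
      unfold sgn
      rw [Equiv.Perm.sign_swap hne]
      push_cast
      ring
    have happ : ∀ x : Fin (p + m),
        (Equiv.swap (Fin.last (p + m)) (Fin.castSucc a₀) * extL ρ') (Fin.castSucc x)
          = if ρ' x = a₀ then Fin.last (p + m) else Fin.castSucc (ρ' x) := by
      intro x
      rw [Equiv.Perm.mul_apply, emb_one_castSucc, swap_last_castSucc]
    have hlastapp : (Equiv.swap (Fin.last (p + m)) (Fin.castSucc a₀) * extL ρ')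
        (Fin.last (p + m)) = Fin.castSucc a₀ := by
      rw [Equiv.Perm.mul_apply, emb_one_last, Equiv.swap_apply_left]
    have hsnoc : ∀ (v : Fin n) (x : Fin (p + m)),
        (Fin.snoc f₀ v : Fin (p+m+1) → Fin n)
            ((Equiv.swap (Fin.last (p + m)) (Fin.castSucc a₀) * extL ρ') (Fin.castSucc x))
          = if ρ' x = a₀ then v else f₀ (ρ' x) := by
      intro v x
      rw [happ, apply_ite (Fin.snoc f₀ v : Fin (p+m+1) → Fin n), Fin.snoc_last, Fin.snoc_castSucc]
    have collapse : ∀ x : Fin (p + m),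
        (if ρ' x = a₀ then f₀ a₀ else f₀ (ρ' x)) = f₀ (ρ' x) := by
      intro x
      by_cases h : ρ' x = a₀
      · rw [if_pos h, h]
      · rw [if_neg h]
    have pointwise : ∀ v : Fin n, (sgn (Equiv.swap (Fin.last (p + m)) (Fin.castSucc a₀) * extL ρ') *
        ψ (fun i => (Fin.snoc f₀ v : Fin (p+m+1) → Fin n) (Fin.castSucc (Fin.castAdd m i)))
          (fun i => (Fin.snoc f₀ v : Fin (p+m+1) → Fin n)
            ((Equiv.swap (Fin.last (p + m)) (Fin.castSucc a₀) * extL ρ')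
              (Fin.castSucc (Fin.castAdd m i)))) *
        ((∏ i : Fin m, (if (Fin.snoc f₀ v : Fin (p+m+1) → Fin n) (Fin.castSucc (Fin.natAdd p i))
              = (Fin.snoc f₀ v : Fin (p+m+1) → Fin n)
                ((Equiv.swap (Fin.last (p + m)) (Fin.castSucc a₀) * extL ρ')
                  (Fin.castSucc (Fin.natAdd p i))) then (1 : ℝ) else 0)) *
          (if (Fin.snoc f₀ v : Fin (p+m+1) → Fin n) (Fin.last (p + m))
              = (Fin.snoc f₀ v : Fin (p+m+1) → Fin n)
                ((Equiv.swap (Fin.last (p + m)) (Fin.castSucc a₀) * extL ρ') (Fin.last (p + m)))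
            then (1 : ℝ) else 0)))
        = (if v = f₀ a₀ then -(B ρ' f₀) else 0) := by
      intro v
      by_cases hv : v = f₀ a₀
      · subst hv
        rw [if_pos rfl]
        simp only [hsnoc, collapse, hlastapp, Fin.snoc_castSucc, Fin.snoc_last, hsgn,
          if_pos rfl, mul_one, hB]
        split_ifs with h
        · ring
        · exact absurd trivial h
      · rw [if_neg hv]
        simp only [hlastapp, Fin.snoc_last, Fin.snoc_castSucc, if_neg hv, mul_zero]
    rw [Finset.sum_congr rfl fun v _ => pointwise v, Finset.sum_ite_eq' Finset.univ (f₀ a₀)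
      (fun _ => -(B ρ' f₀)), if_pos (Finset.mem_univ _)]
  have hcs' : ∀ a₀ : Fin (p + m),
      (∑ ρ' : Perm (Fin (p + m)), ∑ f₀ : Fin (p + m) → Fin n, ∑ v : Fin n, (sgn (Equiv.swap (Fin.last (p + m)) (Fin.castSucc a₀) * extL ρ') *
        ψ (fun i => (Fin.snoc f₀ v : Fin (p+m+1) → Fin n) (Fin.castSucc (Fin.castAdd m i)))
          (fun i => (Fin.snoc f₀ v : Fin (p+m+1) → Fin n)
            ((Equiv.swap (Fin.last (p + m)) (Fin.castSucc a₀) * extL ρ')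
              (Fin.castSucc (Fin.castAdd m i)))) *
        ((∏ i : Fin m, (if (Fin.snoc f₀ v : Fin (p+m+1) → Fin n) (Fin.castSucc (Fin.natAdd p i))
              = (Fin.snoc f₀ v : Fin (p+m+1) → Fin n)
                ((Equiv.swap (Fin.last (p + m)) (Fin.castSucc a₀) * extL ρ')
                  (Fin.castSucc (Fin.natAdd p i))) then (1 : ℝ) else 0)) *
          (if (Fin.snoc f₀ v : Fin (p+m+1) → Fin n) (Fin.last (p + m))
              = (Fin.snoc f₀ v : Fin (p+m+1) → Fin n)
                ((Equiv.swap (Fin.last (p + m)) (Fin.castSucc a₀) * extL ρ') (Fin.last (p + m)))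
            then (1 : ℝ) else 0))))
      = -Uaux ψ m := by
    intro a₀
    rw [hUm]
    rw [Finset.sum_congr rfl fun ρ' _ => Finset.sum_congr rfl fun f₀ _ => hcs a₀ ρ' f₀]
    exact (Finset.sum_congr rfl fun ρ' _ => Finset.sum_neg_distrib _).trans
      (Finset.sum_neg_distrib _)
  rw [Finset.sum_congr rfl fun a₀ _ => hcs' a₀, hlast, Finset.sum_const, Finset.card_univ,
    Fintype.card_fin, nsmul_eq_mul]
  push_cast
  ring



lemma Uaux_closed {p : ℕ} (ψ : DF n p p) (hψ : IsAlt ψ) (m : ℕ) :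
    Uaux ψ m = (∏ j ∈ Finset.range m, ((n : ℝ) - ((p : ℝ) + (j : ℝ)))) *
      ((Nat.factorial p : ℝ) * fullContr ψ) := by
  induction m with
  | zero => rw [Uaux_zero ψ hψ]; simp
  | succ m ih =>
      rw [proof_Uaux_succ, ih, Finset.prod_range_succ]
      push_cast
      ring

lemma dpow_g_apply : ∀ (q : ℕ) (X Y : Fin (1 * q) → Fin n),
    dpow (gDF n) q X Y = (Nat.factorial q : ℝ) *
      ∑ π : Perm (Fin (1 * q)), sgn π * ∏ i : Fin (1 * q),
        (if X i = Y (π i) then (1 : ℝ) else 0) := by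
  intro q
  induction q with
  | zero =>
      intro X Y
      have hempty : ∀ i : Fin (1 * 0), False := fun i => by
        have := i.2; omega
      have huniq : ∀ π : Perm (Fin (1 * 0)), π = 1 := fun π =>
        Equiv.ext fun i => absurd (hempty i) not_false
      rw [show dpow (gDF n) 0 X Y = 1 from rfl]
      rw [Fintype.sum_eq_single (1 : Perm (Fin (1 * 0))) (fun π hπ => absurd (huniq π) hπ)]
      rw [Finset.prod_eq_one (fun i (_ : i ∈ Finset.univ) => absurd (hempty i) not_false),
        sgn_one]
      norm_num
  | succ q ih =>
      intro X Y
      have e0 : dpow (gDF n) (q + 1) X Y =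
          (1 / ((Nat.factorial (1 * q) * Nat.factorial (1 * q) *
              Nat.factorial 1 * Nat.factorial 1 : ℕ) : ℝ)) *
            ∑ σ : Perm (Fin (1 * q + 1)), ∑ τ : Perm (Fin (1 * q + 1)),
              sgn σ * sgn τ *
                dpow (gDF n) q (fun i => X (σ (Fin.castAdd 1 i)))
                  (fun j => Y (τ (Fin.castAdd 1 j))) *
                (if X (σ (Fin.natAdd (1 * q) 0)) = Y (τ (Fin.natAdd (1 * q) 0))
                  then (1 : ℝ) else 0) := rfl
      -- step 1: expand the inner dpow and reorganize into a sum over π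
      have e1 : ∀ (σ τ : Perm (Fin (1 * q + 1))),
          sgn σ * sgn τ *
              dpow (gDF n) q (fun i => X (σ (Fin.castAdd 1 i)))
                (fun j => Y (τ (Fin.castAdd 1 j))) *
              (if X (σ (Fin.natAdd (1 * q) 0)) = Y (τ (Fin.natAdd (1 * q) 0))
                then (1 : ℝ) else 0)
            = ∑ π : Perm (Fin (1 * q)), (Nat.factorial q : ℝ) *
                (sgn σ * sgn τ * sgn π *
                  (∏ i : Fin (1 * q),
                    (if X (σ (Fin.castAdd 1 i)) = Y (τ (Fin.castAdd 1 (π i)))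
                      then (1 : ℝ) else 0)) *
                  (if X (σ (Fin.natAdd (1 * q) 0)) = Y (τ (Fin.natAdd (1 * q) 0))
                    then (1 : ℝ) else 0)) := by
        intro σ τ
        rw [ih]
        simp only [Finset.mul_sum, Finset.sum_mul]
        exact Finset.sum_congr rfl fun π _ => by ring
      -- step 2: for fixed σ and π, reindex the sum over τ
      have e2 : ∀ (σ : Perm (Fin (1 * q + 1))) (π : Perm (Fin (1 * q))),
          (∑ τ : Perm (Fin (1 * q + 1)),
            sgn σ * sgn τ * sgn π *
              (∏ i : Fin (1 * q),
                (if X (σ (Fin.castAdd 1 i)) = Y (τ (Fin.castAdd 1 (π i)))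
                  then (1 : ℝ) else 0)) *
              (if X (σ (Fin.natAdd (1 * q) 0)) = Y (τ (Fin.natAdd (1 * q) 0))
                then (1 : ℝ) else 0))
          = ∑ π' : Perm (Fin (1 * q + 1)), sgn π' *
              ∏ j : Fin (1 * q + 1), (if X j = Y (π' j) then (1 : ℝ) else 0) := by
        intro σ π
        apply Fintype.sum_equiv (Equiv.mulRight (emb π (1 : Perm (Fin 1)) * σ⁻¹))
        intro τ
        have hsgn : sgn (τ * (emb π (1 : Perm (Fin 1)) * σ⁻¹)) = sgn τ * sgn π * sgn σ := by
          rw [sgn_mul, sgn_mul, sgn_emb, sgn_one, sgn_inv, mul_one]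
          ring
        have hprod : (∏ j : Fin (1 * q + 1),
            (if X j = Y ((τ * (emb π (1 : Perm (Fin 1)) * σ⁻¹)) j) then (1 : ℝ) else 0))
            = (∏ i : Fin (1 * q),
                (if X (σ (Fin.castAdd 1 i)) = Y (τ (Fin.castAdd 1 (π i)))
                  then (1 : ℝ) else 0)) *
              (if X (σ (Fin.natAdd (1 * q) 0)) = Y (τ (Fin.natAdd (1 * q) 0))
                then (1 : ℝ) else 0) := by
          rw [Fintype.prod_equiv σ.symm
            (fun j => if X j = Y ((τ * (emb π (1 : Perm (Fin 1)) * σ⁻¹)) j) then (1 : ℝ) else 0)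
            (fun j => if X (σ j) = Y (τ (emb π (1 : Perm (Fin 1)) j)) then (1 : ℝ) else 0)
            (fun j => by simp [Equiv.Perm.mul_apply, Equiv.Perm.inv_def]; exact if_congr Iff.rfl rfl rfl)]
          rw [← Fintype.prod_equiv finSumFinEquiv
            (fun s : Fin (1 * q) ⊕ Fin 1 =>
              if X (σ (finSumFinEquiv s)) = Y (τ (emb π (1 : Perm (Fin 1)) (finSumFinEquiv s)))
                then (1 : ℝ) else 0)
            (fun j => if X (σ j) = Y (τ (emb π (1 : Perm (Fin 1)) j)) then (1 : ℝ) else 0)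
            (fun s => rfl)]
          rw [Fintype.prod_sum_type]
          simp only [finSumFinEquiv_apply_left, finSumFinEquiv_apply_right, emb_castAdd,
            emb_natAdd, Equiv.Perm.one_apply]
          rw [Fin.prod_univ_one]
        simp only [Equiv.coe_mulRight]
        rw [hsgn]; erw [hprod]
        ring
      have e3 : ∀ σ : Perm (Fin (1 * q + 1)),
          (∑ τ : Perm (Fin (1 * q + 1)),
            sgn σ * sgn τ *
              dpow (gDF n) q (fun i => X (σ (Fin.castAdd 1 i)))
                (fun j => Y (τ (Fin.castAdd 1 j))) *
              (if X (σ (Fin.natAdd (1 * q) 0)) = Y (τ (Fin.natAdd (1 * q) 0))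
                then (1 : ℝ) else 0))
          = (Nat.factorial (1 * q) : ℝ) * ((Nat.factorial q : ℝ) *
              ∑ π' : Perm (Fin (1 * q + 1)), sgn π' *
                ∏ j : Fin (1 * q + 1), (if X j = Y (π' j) then (1 : ℝ) else 0)) := by
        intro σ
        rw [Finset.sum_congr rfl fun τ _ => e1 σ τ, Finset.sum_comm]
        rw [Finset.sum_congr rfl fun π (_ : π ∈ Finset.univ) =>
          (Finset.mul_sum Finset.univ _ (Nat.factorial q : ℝ)).symm.trans
            (congrArg _ (e2 σ π))]
        rw [Finset.sum_const, Finset.card_univ, Fintype.card_perm, Fintype.card_fin,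
          nsmul_eq_mul]
      rw [e0, Finset.sum_congr rfl fun σ _ => e3 σ, Finset.sum_const, Finset.card_univ,
        Fintype.card_perm, Fintype.card_fin, nsmul_eq_mul]
      rw [show (∑ π' : Perm (Fin (1 * (q + 1))), sgn π' * ∏ j : Fin (1 * (q + 1)),
          (if X j = Y (π' j) then (1 : ℝ) else 0))
        = ∑ π' : Perm (Fin (1 * q + 1)), sgn π' * ∏ j : Fin (1 * q + 1),
          (if X j = Y (π' j) then (1 : ℝ) else 0) from rfl]
      set S := ∑ π' : Perm (Fin (1 * q + 1)), sgn π' * ∏ j : Fin (1 * q + 1),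
          (if X j = Y (π' j) then (1 : ℝ) else 0) with hS
      have h1q : 1 * q = q := one_mul q
      rw [h1q]
      have hfac : (Nat.factorial q : ℝ) ≠ 0 := Nat.cast_ne_zero.mpr (Nat.factorial_ne_zero q)
      push_cast
      field_simp
      ring


lemma fac_prod (p : ℕ) : ∀ q : ℕ, Nat.factorial p * ∏ j ∈ Finset.Icc 1 q, (p + j)
    = Nat.factorial (p + q) := by
  intro q
  induction q with
  | zero => simp
  | succ q ih =>
      rw [Finset.prod_Icc_succ_top (Nat.le_add_left 1 q), ← mul_assoc, ih,
        show p + (q + 1) = (p + q) + 1 from rfl, Nat.factorial_succ]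
      ring

lemma prod_sub (m : ℕ) : ∀ q : ℕ, (∏ j ∈ Finset.Icc 1 q, (m + 1 - j))
    = Nat.descFactorial m q := by
  intro q
  induction q with
  | zero => simp
  | succ q ih =>
      rw [Finset.prod_Icc_succ_top (Nat.le_add_left 1 q), ih, Nat.descFactorial_succ,
        show m + 1 - (q + 1) = m - q by omega]
      ring

lemma prod_range_sub (m : ℕ) : ∀ q : ℕ, (∏ j ∈ Finset.range q, (m - j))
    = Nat.descFactorial m q := by
  intro q
  induction q with
  | zero => simp
  | succ q ih => rw [Finset.prod_range_succ, ih, Nat.descFactorial_succ]; ring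

/-- The main reduction: the full contraction in terms of `Uaux`. -/
lemma contr_eq {p : ℕ} (q : ℕ) (ψ : DF n p p) :
    fullContr (dmul ψ (dpow (gDF n) q)) =
      (1 / ((Nat.factorial p * Nat.factorial p *
          Nat.factorial (1 * q) * Nat.factorial (1 * q) : ℕ) : ℝ)) *
        ((Nat.factorial (p + 1 * q) : ℝ) * ((Nat.factorial (1 * q) : ℝ) *
          ((Nat.factorial q : ℝ) * Uaux ψ (1 * q)))) := by
  have e0 : fullContr (dmul ψ (dpow (gDF n) q)) =
      ∑ f : Fin (p + 1 * q) → Fin n,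
        (1 / ((Nat.factorial p * Nat.factorial p *
            Nat.factorial (1 * q) * Nat.factorial (1 * q) : ℕ) : ℝ)) *
          ∑ σ : Perm (Fin (p + 1 * q)), ∑ τ : Perm (Fin (p + 1 * q)),
            sgn σ * sgn τ *
              ψ (fun i => f (σ (Fin.castAdd (1 * q) i)))
                (fun j => f (τ (Fin.castAdd (1 * q) j))) *
              dpow (gDF n) q (fun i => f (σ (Fin.natAdd p i)))
                (fun j => f (τ (Fin.natAdd p j))) := rfl
  rw [e0, ← Finset.mul_sum]
  congr 1
  -- pointwise expansion of the inner sum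
  have e1 : ∀ (f : Fin (p + 1 * q) → Fin n) (σ τ : Perm (Fin (p + 1 * q))),
      sgn σ * sgn τ *
          ψ (fun i => f (σ (Fin.castAdd (1 * q) i)))
            (fun j => f (τ (Fin.castAdd (1 * q) j))) *
          dpow (gDF n) q (fun i => f (σ (Fin.natAdd p i)))
            (fun j => f (τ (Fin.natAdd p j)))
        = ∑ π : Perm (Fin (1 * q)), (Nat.factorial q : ℝ) *
            (sgn σ * sgn τ * sgn π *
              ψ (fun i => f (σ (Fin.castAdd (1 * q) i)))
                (fun j => f (τ (Fin.castAdd (1 * q) j))) *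
              ∏ i : Fin (1 * q),
                (if f (σ (Fin.natAdd p i)) = f (τ (Fin.natAdd p (π i)))
                  then (1 : ℝ) else 0)) := by
    intro f σ τ
    simp only [dpow_g_apply]
    simp only [Finset.mul_sum, Finset.sum_mul]
    exact Finset.sum_congr rfl fun π _ => by ring
  -- reindex the τ-sum
  have e2 : ∀ (f : Fin (p + 1 * q) → Fin n) (σ : Perm (Fin (p + 1 * q)))
      (π : Perm (Fin (1 * q))),
      (∑ τ : Perm (Fin (p + 1 * q)),
        sgn σ * sgn τ * sgn π *
          ψ (fun i => f (σ (Fin.castAdd (1 * q) i)))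
            (fun j => f (τ (Fin.castAdd (1 * q) j))) *
          ∏ i : Fin (1 * q),
            (if f (σ (Fin.natAdd p i)) = f (τ (Fin.natAdd p (π i)))
              then (1 : ℝ) else 0))
      = ∑ ρ : Perm (Fin (p + 1 * q)),
          sgn ρ *
            ψ (fun i => f (σ (Fin.castAdd (1 * q) i)))
              (fun j => f (σ (ρ (Fin.castAdd (1 * q) j)))) *
            ∏ i : Fin (1 * q),
              (if f (σ (Fin.natAdd p i)) = f (σ (ρ (Fin.natAdd p i)))
                then (1 : ℝ) else 0) := by
    intro f σ π
    apply Fintype.sum_equiv ((Equiv.mulLeft σ⁻¹).trans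
      (Equiv.mulRight (emb (1 : Perm (Fin p)) π)))
    intro τ
    have hc : ∀ j : Fin p,
        σ ((σ⁻¹ * τ * emb (1 : Perm (Fin p)) π) (Fin.castAdd (1 * q) j))
          = τ (Fin.castAdd (1 * q) j) := by
      intro j
      simp [Equiv.Perm.mul_apply]
    have hn : ∀ i : Fin (1 * q),
        σ ((σ⁻¹ * τ * emb (1 : Perm (Fin p)) π) (Fin.natAdd p i))
          = τ (Fin.natAdd p (π i)) := by
      intro i
      simp [Equiv.Perm.mul_apply]
    have hsgn : sgn (σ⁻¹ * τ * emb (1 : Perm (Fin p)) π) = sgn σ * sgn τ * sgn π := by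
      rw [sgn_mul, sgn_mul, sgn_emb, sgn_one, sgn_inv]
      ring
    have he : ((Equiv.mulLeft σ⁻¹).trans (Equiv.mulRight (emb (1 : Perm (Fin p)) π))) τ
        = σ⁻¹ * τ * emb (1 : Perm (Fin p)) π := rfl
    rw [he]
    simp only [hsgn, hc, hn]
  -- per (f, σ): collapse the τ- and π-sums
  have e3 : ∀ (f : Fin (p + 1 * q) → Fin n) (σ : Perm (Fin (p + 1 * q))),
      (∑ τ : Perm (Fin (p + 1 * q)),
        sgn σ * sgn τ *
          ψ (fun i => f (σ (Fin.castAdd (1 * q) i)))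
            (fun j => f (τ (Fin.castAdd (1 * q) j))) *
          dpow (gDF n) q (fun i => f (σ (Fin.natAdd p i)))
            (fun j => f (τ (Fin.natAdd p j))))
      = ((Nat.factorial (1 * q) : ℝ)) * ((Nat.factorial q : ℝ) *
          ∑ ρ : Perm (Fin (p + 1 * q)),
            sgn ρ *
              ψ (fun i => f (σ (Fin.castAdd (1 * q) i)))
                (fun j => f (σ (ρ (Fin.castAdd (1 * q) j)))) *
              ∏ i : Fin (1 * q),
                (if f (σ (Fin.natAdd p i)) = f (σ (ρ (Fin.natAdd p i)))
                  then (1 : ℝ) else 0)) := by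
    intro f σ
    rw [Finset.sum_congr rfl fun τ _ => e1 f σ τ, Finset.sum_comm]
    rw [Finset.sum_congr rfl fun π (_ : π ∈ Finset.univ) =>
      (Finset.mul_sum Finset.univ _ (Nat.factorial q : ℝ)).symm.trans
        (congrArg _ (e2 f σ π))]
    rw [Finset.sum_const, Finset.card_univ, Fintype.card_perm, Fintype.card_fin,
      nsmul_eq_mul]
  -- reindex the f-sum
  have e4 : ∀ σ : Perm (Fin (p + 1 * q)),
      (∑ f : Fin (p + 1 * q) → Fin n, ∑ ρ : Perm (Fin (p + 1 * q)),
        sgn ρ *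
          ψ (fun i => f (σ (Fin.castAdd (1 * q) i)))
            (fun j => f (σ (ρ (Fin.castAdd (1 * q) j)))) *
          ∏ i : Fin (1 * q),
            (if f (σ (Fin.natAdd p i)) = f (σ (ρ (Fin.natAdd p i)))
              then (1 : ℝ) else 0))
      = ∑ f : Fin (p + 1 * q) → Fin n, ∑ ρ : Perm (Fin (p + 1 * q)),
          sgn ρ *
            ψ (fun i => f (Fin.castAdd (1 * q) i))
              (fun i => f (ρ (Fin.castAdd (1 * q) i))) *
            ∏ i : Fin (1 * q),
              (if f (Fin.natAdd p i) = f (ρ (Fin.natAdd p i)) then (1 : ℝ) else 0) := by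
    intro σ
    exact Fintype.sum_equiv (Equiv.arrowCongr σ.symm (Equiv.refl (Fin n))) _ _
      (fun f => rfl)
  have e5 : ∀ σ : Perm (Fin (p + 1 * q)),
      (∑ f : Fin (p + 1 * q) → Fin n,
        ((Nat.factorial (1 * q) : ℝ)) * ((Nat.factorial q : ℝ) *
          ∑ ρ : Perm (Fin (p + 1 * q)),
            sgn ρ *
              ψ (fun i => f (σ (Fin.castAdd (1 * q) i)))
                (fun j => f (σ (ρ (Fin.castAdd (1 * q) j)))) *
              ∏ i : Fin (1 * q),
                (if f (σ (Fin.natAdd p i)) = f (σ (ρ (Fin.natAdd p i)))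
                  then (1 : ℝ) else 0)))
      = ((Nat.factorial (1 * q) : ℝ)) * ((Nat.factorial q : ℝ) *
          ∑ f : Fin (p + 1 * q) → Fin n, ∑ ρ : Perm (Fin (p + 1 * q)),
            sgn ρ *
              ψ (fun i => f (Fin.castAdd (1 * q) i))
                (fun i => f (ρ (Fin.castAdd (1 * q) i))) *
              ∏ i : Fin (1 * q),
                (if f (Fin.natAdd p i) = f (ρ (Fin.natAdd p i)) then (1 : ℝ) else 0)) := by
    intro σ
    rw [← Finset.mul_sum]
    congr 1
    rw [← Finset.mul_sum]
    congr 1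
    exact e4 σ
  rw [Finset.sum_congr rfl fun f (_ : f ∈ Finset.univ) =>
      Finset.sum_congr rfl fun σ _ => e3 f σ,
    Finset.sum_comm,
    Finset.sum_congr rfl fun σ (_ : σ ∈ Finset.univ) => e5 σ,
    Finset.sum_const, Finset.card_univ, Fintype.card_perm, Fintype.card_fin, nsmul_eq_mul]
  have hU : Uaux ψ (1 * q) =
      ∑ f : Fin (p + 1 * q) → Fin n, ∑ ρ : Perm (Fin (p + 1 * q)),
        sgn ρ *
          ψ (fun i => f (Fin.castAdd (1 * q) i))
            (fun i => f (ρ (Fin.castAdd (1 * q) i))) *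
          ∏ i : Fin (1 * q),
            (if f (Fin.natAdd p i) = f (ρ (Fin.natAdd p i)) then (1 : ℝ) else 0) :=
    Finset.sum_comm
  rw [hU]


end GB
end Helpers

open GB Equiv

/-- On an `n`-dimensional real inner product space, for every alternating
`(p,p)`-double form `ψ` and every `1 ≤ q ≤ n - p`,
`C^(p+q)(ψ ⊘ g^q) = (∏_{j=1}^q (p+j)(n-p+1-j)) C^p(ψ)
                 = (q!)² binom(p+q,q) binom(n-p,q) C^p(ψ)`. -/
theorem fullContr_dmul_g_pow (n p q : ℕ) (ψ : DF n p p) (hψ : IsAlt ψ)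
    (h1 : 1 ≤ q) (h2 : q ≤ n - p) :
    fullContr (dmul ψ (dpow (gDF n) q)) =
        (∏ j ∈ Finset.Icc 1 q, (((p + j) * (n - p + 1 - j) : ℕ) : ℝ)) * fullContr ψ ∧
      fullContr (dmul ψ (dpow (gDF n) q)) =
        (Nat.factorial q : ℝ) ^ 2 * (Nat.choose (p + q) q : ℝ) * (Nat.choose (n - p) q : ℝ) *
          fullContr ψ := by
  have hpn : p ≤ n := by omega
  have hrange : (∏ j ∈ Finset.range q, ((n : ℝ) - ((p : ℝ) + (j : ℝ))))
      = ((Nat.descFactorial (n - p) q : ℕ) : ℝ) := by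
    rw [← prod_range_sub (n - p) q, Nat.cast_prod]
    apply Finset.prod_congr rfl
    intro j hj
    have hj' : j < q := Finset.mem_range.mp hj
    have hle : p + j ≤ n := by omega
    have hcast : ((n - p - j : ℕ) : ℝ) = (n : ℝ) - ((p : ℝ) + (j : ℝ)) := by
      rw [Nat.sub_sub, Nat.cast_sub hle]
      push_cast
      ring
    rw [hcast]
  have hIccNat : (∏ j ∈ Finset.Icc 1 q, ((p + j) * (n - p + 1 - j))) * Nat.factorial p
      = Nat.factorial (p + q) * Nat.descFactorial (n - p) q := by
    rw [Finset.prod_mul_distrib, prod_sub (n - p) q, ← fac_prod p q]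
    ring
  have hIccR : ((∏ j ∈ Finset.Icc 1 q, ((p + j) * (n - p + 1 - j)) : ℕ) : ℝ) *
      (Nat.factorial p : ℝ)
      = (Nat.factorial (p + q) : ℝ) * ((Nat.descFactorial (n - p) q : ℕ) : ℝ) := by
    exact_mod_cast congrArg (Nat.cast : ℕ → ℝ) hIccNat
  have key : fullContr (dmul ψ (dpow (gDF n) q)) =
      (∏ j ∈ Finset.Icc 1 q, (((p + j) * (n - p + 1 - j) : ℕ) : ℝ)) * fullContr ψ := by
    rw [contr_eq q ψ, Uaux_closed ψ hψ (1 * q)]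
    simp only [one_mul]
    rw [hrange, ← Nat.cast_prod]
    have hgoal : ∀ PI D C' : ℝ, PI * (Nat.factorial p : ℝ) = (Nat.factorial (p + q) : ℝ) * D →
        1 / ((Nat.factorial p * Nat.factorial p *
            Nat.factorial q * Nat.factorial q : ℕ) : ℝ) *
          ((Nat.factorial (p + q) : ℝ) * ((Nat.factorial q : ℝ) *
            ((Nat.factorial q : ℝ) * (D * ((Nat.factorial p : ℝ) * C'))))) = PI * C' := by
      intro PI D C' h
      have hp0 : (Nat.factorial p : ℝ) ≠ 0 :=
        Nat.cast_ne_zero.mpr (Nat.factorial_ne_zero p)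
      have hq0 : (Nat.factorial q : ℝ) ≠ 0 :=
        Nat.cast_ne_zero.mpr (Nat.factorial_ne_zero q)
      push_cast
      field_simp
      linear_combination (-C') * h
    exact hgoal _ _ _ hIccR
  refine ⟨key, key.trans ?_⟩
  have hc1 : (∏ j ∈ Finset.Icc 1 q, (p + j)) = Nat.choose (p + q) q * Nat.factorial q := by
    have h := Nat.choose_mul_factorial_mul_factorial (Nat.le_add_left q p)
    have h2 : p + q - q = p := by omega
    rw [h2] at h
    have h3 : Nat.factorial p * (Nat.choose (p + q) q * Nat.factorial q)
        = Nat.factorial p * ∏ j ∈ Finset.Icc 1 q, (p + j) := by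
      rw [fac_prod p q, ← h]
      ring
    exact (Nat.eq_of_mul_eq_mul_left (Nat.factorial_pos p) h3).symm
  have hN : (∏ j ∈ Finset.Icc 1 q, ((p + j) * (n - p + 1 - j)))
      = Nat.factorial q ^ 2 * Nat.choose (p + q) q * Nat.choose (n - p) q := by
    rw [Finset.prod_mul_distrib, hc1, prod_sub (n - p) q,
      Nat.descFactorial_eq_factorial_mul_choose]
    ring
  rw [show (∏ j ∈ Finset.Icc 1 q, (((p + j) * (n - p + 1 - j) : ℕ) : ℝ))
      = ((∏ j ∈ Finset.Icc 1 q, ((p + j) * (n - p + 1 - j)) : ℕ) : ℝ) from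
    (Nat.cast_prod _ _).symm, hN]
  push_cast
  ring
end
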